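/- arXiv:1509.06591 — 6 statements merged into one kernel-verified Lean document; each statement's English description precedes it below -/
import Mathlib

section
/- For a permutation π of {1,...,k} and a unit vector |φ⟩ in ℂ^d, the partial trace over all k tensor factors of (I ⊗ |φ⟩⟨φ|^{⊗k}) · W_π (where W_π permutes the k+1 tensor factors of (ℂ^d)^{⊗(k+1)}) equals the identity I on ℂ^d if π(1)=1, and equals |φ⟩⟨φ| otherwise. -/
open Matrix Kronecker BigOperators
open scoped ComplexOrder

/-- Partial trace over the second (B) tensor factor. -/
noncomputable def ptraceB {A B : Type*} [Fintype B]
    (M : Matrix (A × B) (A × B) ℂ) : Matrix A A ℂ :=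
  Matrix.of fun a a' => ∑ b, M (a, b) (a', b)

/-- The marginal of a state on `A × (B₁ × ⋯ × B_k)` on the subsystems `A, B_i`. -/
noncomputable def margAB {A B : Type*} {k : ℕ} [Fintype B] [DecidableEq B] (i : Fin k)
    (ρ : Matrix (A × (Fin k → B)) (A × (Fin k → B)) ℂ) : Matrix (A × B) (A × B) ℂ :=
  Matrix.of fun p q => ∑ f : Fin k → B,
    if f i = p.2 then ρ (p.1, f) (q.1, Function.update f i q.2) else 0

/-- A density matrix: positive semidefinite with unit trace. -/
def IsDensity {n : Type*} [Fintype n] (ρ : Matrix n n ℂ) : Prop :=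
  ρ.PosSemidef ∧ ρ.trace = 1

/-- A bipartite state is separable if it is a finite convex combination of
product density matrices. -/
def IsSep {A B : Type*} [Fintype A] [Fintype B]
    (ρ : Matrix (A × B) (A × B) ℂ) : Prop :=
  ∃ (n : ℕ) (p : Fin n → ℝ) (σA : Fin n → Matrix A A ℂ) (σB : Fin n → Matrix B B ℂ),
    (∀ i, 0 ≤ p i) ∧ (∑ i, p i = 1) ∧ (∀ i, IsDensity (σA i)) ∧ (∀ i, IsDensity (σB i)) ∧
    ρ = ∑ i, (p i : ℂ) • (σA i ⊗ₖ σB i)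

/-- `ρAB` has a `k`-symmetric extension. -/
def HasSymExt {A B : Type*} [Fintype A] [Fintype B] [DecidableEq B] (k : ℕ)
    (ρAB : Matrix (A × B) (A × B) ℂ) : Prop :=
  ∃ ρ : Matrix (A × (Fin k → B)) (A × (Fin k → B)) ℂ,
    IsDensity ρ ∧ ∀ i : Fin k, margAB i ρ = ρAB

/-- The permutation operator `W_π` on `(ℂ^B)^{⊗ k}`,
`W_π |i_1 … i_k⟩ = |i_{π⁻¹(1)} … i_{π⁻¹(k)}⟩`. -/
noncomputable def Wperm {k : ℕ} {B : Type*} [DecidableEq B] (π : Equiv.Perm (Fin k)) :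
    Matrix (Fin k → B) (Fin k → B) ℂ :=
  Matrix.of fun f g => if f = g ∘ ⇑π⁻¹ then 1 else 0

/-- `(1/k!) ∑_π W_π`. -/
noncomputable def symProj {k : ℕ} {B : Type*} [DecidableEq B] :
    Matrix (Fin k → B) (Fin k → B) ℂ :=
  ((k.factorial : ℂ))⁻¹ • ∑ π : Equiv.Perm (Fin k), Wperm π

/-- `ρAB` has a `k`-bosonic extension: a `k`-symmetric extension whose support on the
`B` systems lies in the symmetric subspace. -/
def HasBosonicExt {A B : Type*} [Fintype A] [DecidableEq A] [Fintype B] [DecidableEq B] (k : ℕ)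
    (ρAB : Matrix (A × B) (A × B) ℂ) : Prop :=
  ∃ ρ : Matrix (A × (Fin k → B)) (A × (Fin k → B)) ℂ,
    IsDensity ρ ∧ (∀ i : Fin k, margAB i ρ = ρAB) ∧
    ((1 : Matrix A A ℂ) ⊗ₖ symProj) * ρ * ((1 : Matrix A A ℂ) ⊗ₖ symProj) = ρ

lemma sum_prod_pi_aux {k d : ℕ} (g : Fin k → Fin d → ℂ) :
    ∑ h : Fin k → Fin d, ∏ j : Fin k, g j (h j) = ∏ j : Fin k, ∑ x : Fin d, g j x := by
  rw [Finset.prod_univ_sum, Fintype.piFinset_univ]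

/-- Partial trace over the last `k` factors of `(I ⊗ |φ⟩⟨φ|^{⊗k}) Wπ` is `I` if `π(1)=1`
and `|φ⟩⟨φ|` otherwise. -/
theorem stmt0 {d k : ℕ} (π : Equiv.Perm (Fin (k + 1))) (φ : Fin d → ℂ)
    (hφ : ∑ i, Complex.normSq (φ i) = 1) :
    (Matrix.of fun a a' : Fin d => ∑ h : Fin k → Fin d,
        (((Matrix.of fun f g : Fin (k + 1) → Fin d =>
            (if f 0 = g 0 then (1 : ℂ) else 0) *
              ∏ j : Fin k, φ (f j.succ) * (starRingEnd ℂ) (φ (g j.succ))) * Wperm π :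
            Matrix (Fin (k + 1) → Fin d) (Fin (k + 1) → Fin d) ℂ)
          (Fin.cons a h) (Fin.cons a' h))) =
      if π 0 = 0 then (1 : Matrix (Fin d) (Fin d) ℂ)
      else Matrix.of fun a a' => φ a * (starRingEnd ℂ) (φ a') := by
  classical
  have hN : ∑ x, φ x * (starRingEnd ℂ) (φ x) = 1 := by
    have h1 : ∀ x, φ x * (starRingEnd ℂ) (φ x) = (Complex.normSq (φ x) : ℂ) := by
      intro x; rw [Complex.mul_conj]
    simp_rw [h1]
    rw [← Complex.ofReal_sum, hφ, Complex.ofReal_one]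
  ext a a'
  simp only [Matrix.of_apply]
  have hsum : ∀ h : Fin k → Fin d,
      ((Matrix.of fun f g : Fin (k + 1) → Fin d =>
          (if f 0 = g 0 then (1 : ℂ) else 0) *
            ∏ j : Fin k, φ (f j.succ) * (starRingEnd ℂ) (φ (g j.succ))) * Wperm π :
          Matrix (Fin (k + 1) → Fin d) (Fin (k + 1) → Fin d) ℂ)
        (Fin.cons a h) (Fin.cons a' h)
      = (if a = (Fin.cons a' h : Fin (k+1) → Fin d) (π⁻¹ 0) then (1 : ℂ) else 0) *
          ∏ j : Fin k, φ (h j) *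
            (starRingEnd ℂ) (φ ((Fin.cons a' h : Fin (k+1) → Fin d) (π⁻¹ j.succ))) := by
    intro h
    rw [Matrix.mul_apply]
    have hW : ∀ g, Wperm π g (Fin.cons a' h) =
        if g = (Fin.cons a' h : Fin (k+1) → Fin d) ∘ ⇑π⁻¹ then (1 : ℂ) else 0 := fun g => rfl
    simp only [hW, mul_ite, mul_one, mul_zero, Finset.sum_ite_eq' Finset.univ,
      Finset.mem_univ, if_true, Matrix.of_apply, Function.comp_apply, Fin.cons_zero,
      Fin.cons_succ]
  simp_rw [hsum]
  by_cases hc : π 0 = 0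
  · have hci : π⁻¹ 0 = 0 := by nth_rewrite 1 [← hc]; exact Equiv.symm_apply_apply π 0
    have hne : ∀ j : Fin k, π⁻¹ j.succ ≠ 0 := fun j hj =>
      Fin.succ_ne_zero j (π⁻¹.injective (hj.trans hci.symm))
    set e : Fin k → Fin k := fun j => (π⁻¹ j.succ).pred (hne j) with he_def
    have he_succ : ∀ j, (e j).succ = π⁻¹ j.succ := fun j => Fin.succ_pred _ _
    have he_bij : Function.Bijective e := by
      apply Finite.injective_iff_bijective.mp
      intro j j' hjj
      have h2 := congrArg Fin.succ hjj
      rw [he_succ, he_succ] at h2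
      exact Fin.succ_injective _ (π⁻¹.injective h2)
    have key : ∀ h : Fin k → Fin d,
        (if a = (Fin.cons a' h : Fin (k+1) → Fin d) (π⁻¹ 0) then (1 : ℂ) else 0) *
          ∏ j : Fin k, φ (h j) *
            (starRingEnd ℂ) (φ ((Fin.cons a' h : Fin (k+1) → Fin d) (π⁻¹ j.succ)))
        = (if a = a' then (1 : ℂ) else 0) *
            ∏ j : Fin k, φ (h j) * (starRingEnd ℂ) (φ (h j)) := by
      intro h
      rw [hci, Fin.cons_zero]
      congr 1
      rw [Finset.prod_mul_distrib, Finset.prod_mul_distrib]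
      congr 1
      calc ∏ j : Fin k, (starRingEnd ℂ) (φ ((Fin.cons a' h : Fin (k+1) → Fin d) (π⁻¹ j.succ)))
          = ∏ j : Fin k, (starRingEnd ℂ) (φ (h (e j))) := by
            refine Finset.prod_congr rfl fun j _ => ?_
            rw [← he_succ, Fin.cons_succ]
        _ = ∏ j : Fin k, (starRingEnd ℂ) (φ (h j)) :=
            Fintype.prod_bijective e he_bij _ _ (fun j => rfl)
    simp_rw [key]
    rw [← Finset.mul_sum]
    have hsum1 : ∑ h : Fin k → Fin d, ∏ j : Fin k, φ (h j) * (starRingEnd ℂ) (φ (h j)) = 1 := by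
      rw [sum_prod_pi_aux (fun _ x => φ x * (starRingEnd ℂ) (φ x))]
      simp [hN]
    rw [hsum1, mul_one, if_pos hc, Matrix.one_apply]
  · have hci : π⁻¹ 0 ≠ 0 := fun hh =>
      hc ((congrArg π hh).symm.trans (Equiv.apply_symm_apply π 0))
    set m : Fin k := (π⁻¹ 0).pred hci with hm_def
    have hm : m.succ = π⁻¹ 0 := Fin.succ_pred _ _
    set j0 : Fin k := (π 0).pred hc with hj0_def
    have hj0 : j0.succ = π 0 := Fin.succ_pred _ _
    have hπj0 : π⁻¹ j0.succ = 0 := by rw [hj0]; exact Equiv.symm_apply_apply π 0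
    have hne : ∀ j : Fin k, j ≠ j0 → π⁻¹ j.succ ≠ 0 := fun j hj hjz =>
      hj (Fin.succ_injective _ (π⁻¹.injective (hjz.trans hπj0.symm)))
    set e : Fin k → Fin k :=
      fun j => if hj : j = j0 then m else (π⁻¹ j.succ).pred (hne j hj) with he_def
    have he_j0 : e j0 = m := dif_pos rfl
    have he_succ : ∀ j, j ≠ j0 → (e j).succ = π⁻¹ j.succ := by
      intro j hj
      simp only [he_def, dif_neg hj, Fin.succ_pred]
    have he_ne_m : ∀ j, j ≠ j0 → e j ≠ m := by
      intro j hj hem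
      have h1 : π⁻¹ j.succ = π⁻¹ 0 := by rw [← he_succ j hj, hem, hm]
      exact Fin.succ_ne_zero j (π⁻¹.injective h1)
    have he_inj : Function.Injective e := by
      intro j j' hjj
      by_cases h1 : j = j0 <;> by_cases h2 : j' = j0
      · rw [h1, h2]
      · exact absurd (by rw [← hjj, h1, he_j0]) (he_ne_m j' h2)
      · exact absurd (by rw [hjj, h2, he_j0]) (he_ne_m j h1)
      · have h3 := congrArg Fin.succ hjj
        rw [he_succ j h1, he_succ j' h2] at h3
        exact Fin.succ_injective _ (π⁻¹.injective h3)
    have he_bij : Function.Bijective e := Finite.injective_iff_bijective.mp he_inj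
    set G : Fin k → Fin d → ℂ := fun j x =>
      if j = m then (if a = x then φ x else 0) else φ x * (starRingEnd ℂ) (φ x) with hG_def
    have key : ∀ h : Fin k → Fin d,
        (if a = (Fin.cons a' h : Fin (k+1) → Fin d) (π⁻¹ 0) then (1 : ℂ) else 0) *
          ∏ j : Fin k, φ (h j) *
            (starRingEnd ℂ) (φ ((Fin.cons a' h : Fin (k+1) → Fin d) (π⁻¹ j.succ)))
        = (starRingEnd ℂ) (φ a') * ∏ j : Fin k, G j (h j) := by
      intro h
      have hC0 : (Fin.cons a' h : Fin (k+1) → Fin d) (π⁻¹ 0) = h m := by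
        rw [← hm, Fin.cons_succ]
      rw [hC0, Finset.prod_mul_distrib]
      have hp1 : ∏ j : Fin k, φ (h j)
          = φ (h m) * ∏ j ∈ Finset.univ.erase m, φ (h j) :=
        (Finset.mul_prod_erase Finset.univ _ (Finset.mem_univ m)).symm
      have hp2 : ∏ j : Fin k,
            (starRingEnd ℂ) (φ ((Fin.cons a' h : Fin (k+1) → Fin d) (π⁻¹ j.succ)))
          = (starRingEnd ℂ) (φ a') *
              ∏ j ∈ Finset.univ.erase m, (starRingEnd ℂ) (φ (h j)) := by
        rw [← Finset.mul_prod_erase Finset.univ _ (Finset.mem_univ j0), hπj0, Fin.cons_zero]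
        congr 1
        refine Finset.prod_nbij e ?_ ?_ ?_ ?_
        · intro j hj
          rw [Finset.mem_erase] at hj ⊢
          exact ⟨he_ne_m j hj.1, Finset.mem_univ _⟩
        · exact fun x _ y _ hxy => he_inj hxy
        · intro x hx
          obtain ⟨j, rfl⟩ := he_bij.2 x
          refine ⟨j, ?_, rfl⟩
          simp only [Finset.coe_erase, Set.mem_diff, Finset.coe_univ, Set.mem_univ, true_and,
            Set.mem_singleton_iff] at hx ⊢
          intro hjj
          exact hx (by rw [hjj, he_j0])
        · intro j hj
          rw [Finset.mem_erase] at hj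
          rw [← he_succ j hj.1, Fin.cons_succ]
      rw [hp1, hp2]
      have hp3 : ∏ j : Fin k, G j (h j)
          = G m (h m) * ∏ j ∈ Finset.univ.erase m, G j (h j) :=
        (Finset.mul_prod_erase Finset.univ _ (Finset.mem_univ m)).symm
      have hp4 : ∀ j ∈ Finset.univ.erase m, G j (h j) = φ (h j) * (starRingEnd ℂ) (φ (h j)) := by
        intro j hj
        rw [Finset.mem_erase] at hj
        simp only [hG_def, if_neg hj.1]
      rw [hp3, Finset.prod_congr rfl hp4]
      have hGm : G m (h m) = (if a = h m then (1:ℂ) else 0) * φ (h m) := by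
        simp only [hG_def, if_pos rfl, ite_mul, one_mul, zero_mul]
      rw [hGm, Finset.prod_mul_distrib]
      ring
    simp_rw [key]
    rw [← Finset.mul_sum]
    have hsum2 : ∑ h : Fin k → Fin d, ∏ j : Fin k, G j (h j) = φ a := by
      rw [sum_prod_pi_aux G]
      rw [← Finset.mul_prod_erase Finset.univ _ (Finset.mem_univ m)]
      have h1 : ∑ x, G m x = φ a := by
        simp only [hG_def, if_pos rfl]
        rw [Finset.sum_ite_eq]
        simp
      have h2 : ∀ j ∈ Finset.univ.erase m, ∑ x, G j x = 1 := by
        intro j hj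
        rw [Finset.mem_erase] at hj
        simp only [hG_def, if_neg hj.1]
        exact hN
      rw [h1, Finset.prod_congr rfl h2]
      simp
    rw [hsum2, if_neg hc, Matrix.of_apply, mul_comm]
end

section
/- For any density matrix ρ supported on the symmetric subspace ∨^k ℂ^d, the map E(ρ) = Tr_{2..k}[ (I ⊗ ρ) · Σ_{π ∈ S_{k+1}} W_π ] (partial trace over the last k factors) is proportional to tr(ρ)·I + k·ρ₁, where ρ₁ is the one-particle reduced density matrix of ρ. -/
open Matrix Kronecker BigOperators
open scoped ComplexOrder

/-- One-particle reduced density matrix on the `i`-th factor. -/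
noncomputable def marg1 {k : ℕ} {B : Type*} [Fintype B] [DecidableEq B] (i : Fin k)
    (ρ : Matrix (Fin k → B) (Fin k → B) ℂ) : Matrix B B ℂ :=
  Matrix.of fun b b' => ∑ f : Fin k → B,
    if f i = b then ρ f (Function.update f i b') else 0

section aux
variable {k : ℕ} {B : Type*} [DecidableEq B] [Fintype B]

lemma mul_Wperm_apply (M : Matrix (Fin k → B) (Fin k → B) ℂ) (σ : Equiv.Perm (Fin k))
    (f g : Fin k → B) : (M * Wperm σ : Matrix (Fin k → B) (Fin k → B) ℂ) f g = M f (g ∘ ⇑σ⁻¹) := by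
  simp [Wperm, Matrix.mul_apply, mul_ite]

lemma Wperm_mul_apply (σ : Equiv.Perm (Fin k)) (M : Matrix (Fin k → B) (Fin k → B) ℂ)
    (f g : Fin k → B) : (Wperm σ * M : Matrix (Fin k → B) (Fin k → B) ℂ) f g = M (f ∘ ⇑σ) g := by
  simp only [Wperm, Matrix.mul_apply, Matrix.of_apply, ite_mul, one_mul, zero_mul]
  have h : ∀ m : Fin k → B, (f = m ∘ ⇑σ⁻¹) = (m = f ∘ ⇑σ) := by
    intro m
    apply propext; constructor <;> intro h <;> subst h <;> ext j <;> simp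
  have h' : ∀ m : Fin k → B, (f = m ∘ ⇑σ.symm) = (m = f ∘ ⇑σ) := h
  simp [h']

lemma Wperm_mul (π σ : Equiv.Perm (Fin k)) :
    (Wperm π : Matrix (Fin k → B) (Fin k → B) ℂ) * Wperm σ = Wperm (π * σ) := by
  ext f g
  rw [mul_Wperm_apply]
  simp only [Wperm, Matrix.of_apply]
  congr 2

lemma symProj_mul_Wperm (σ : Equiv.Perm (Fin k)) :
    (symProj : Matrix (Fin k → B) (Fin k → B) ℂ) * Wperm σ = symProj := by
  unfold symProj
  rw [Matrix.smul_mul, Finset.sum_mul]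
  congr 1
  simp_rw [Wperm_mul]
  exact Fintype.sum_equiv (Equiv.mulRight σ) _ _ (fun π => rfl)

lemma Wperm_mul_symProj (σ : Equiv.Perm (Fin k)) :
    Wperm σ * (symProj : Matrix (Fin k → B) (Fin k → B) ℂ) = symProj := by
  unfold symProj
  rw [Matrix.mul_smul, Finset.mul_sum]
  congr 1
  simp_rw [Wperm_mul]
  exact Fintype.sum_equiv (Equiv.mulLeft σ) _ _ (fun π => rfl)

end aux


section inv
variable {d k : ℕ} (ρ : Matrix (Fin k → Fin d) (Fin k → Fin d) ℂ)

lemma rho_left_inv (hsym : symProj * ρ * symProj = ρ) (σ : Equiv.Perm (Fin k))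
    (f g : Fin k → Fin d) : ρ (f ∘ ⇑σ) g = ρ f g := by
  have h1 : Wperm σ * ρ = ρ := by
    conv_lhs => rw [← hsym]
    rw [← mul_assoc, ← mul_assoc, Wperm_mul_symProj]
    exact hsym
  rw [← Wperm_mul_apply σ ρ f g, h1]

lemma rho_right_inv (hsym : symProj * ρ * symProj = ρ) (σ : Equiv.Perm (Fin k))
    (f g : Fin k → Fin d) : ρ f (g ∘ ⇑σ) = ρ f g := by
  have h1 : ρ * Wperm σ⁻¹ = ρ := by
    conv_lhs => rw [← hsym]
    rw [mul_assoc, mul_assoc, symProj_mul_Wperm, ← mul_assoc]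
    exact hsym
  have h2 := mul_Wperm_apply ρ σ⁻¹ f g
  rw [h1, inv_inv] at h2
  exact h2.symm

lemma marg1_invariant (hk : 0 < k) (hsym : symProj * ρ * symProj = ρ) (i : Fin k) :
    marg1 i ρ = marg1 ⟨0, hk⟩ ρ := by
  ext a a'
  simp only [marg1, Matrix.of_apply]
  set z : Fin k := ⟨0, hk⟩ with hz
  set s : Equiv.Perm (Fin k) := Equiv.swap i z with hs
  have e : (Fin k → Fin d) ≃ (Fin k → Fin d) := Equiv.arrowCongr s (Equiv.refl (Fin d))
  rw [← Equiv.sum_comp (Equiv.arrowCongr s (Equiv.refl (Fin d)))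
    (fun h => if h i = a then ρ h (Function.update h i a') else 0)]
  refine Finset.sum_congr rfl fun h _ => ?_
  have he : (Equiv.arrowCongr s (Equiv.refl (Fin d))) h = h ∘ ⇑s := by
    ext j
    simp [Equiv.arrowCongr, hs, Equiv.symm_swap]
  rw [he]
  have h1 : (h ∘ ⇑s) i = h z := by simp [hs]
  have h2 : Function.update (h ∘ ⇑s) i a' = (Function.update h z a') ∘ ⇑s := by
    ext j
    by_cases hj : j = i
    · subst hj; simp [hs, Function.update]
    · have : s j ≠ z := by
        simp only [hs]
        intro hc
        exact hj (s.injective (hc.trans (Equiv.swap_apply_left i z).symm))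
      rw [hs] at this
      simp [Function.update, hj, this, hs]
  rw [h1, h2]
  congr 1
  rw [rho_left_inv ρ hsym s, rho_right_inv ρ hsym s]

end inv

/-- For a state `ρ` supported on the symmetric subspace,
`Tr_{2..k+1}[(I ⊗ ρ) ∑_π W_π] ∝ tr(ρ)·I + k·ρ₁`. -/
theorem stmt2 {d k : ℕ} (hk : 0 < k)
    (ρ : Matrix (Fin k → Fin d) (Fin k → Fin d) ℂ) (hρ : IsDensity ρ)
    (hsym : symProj * ρ * symProj = ρ) :
    ∃ c : ℂ, c ≠ 0 ∧
      (Matrix.of fun a a' : Fin d => ∑ h : Fin k → Fin d,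
          (((Matrix.of fun f g : Fin (k + 1) → Fin d =>
              (if f 0 = g 0 then (1 : ℂ) else 0) * ρ (f ∘ Fin.succ) (g ∘ Fin.succ)) *
            ∑ π : Equiv.Perm (Fin (k + 1)), Wperm π :
              Matrix (Fin (k + 1) → Fin d) (Fin (k + 1) → Fin d) ℂ)
            (Fin.cons a h) (Fin.cons a' h))) =
        c • (ρ.trace • (1 : Matrix (Fin d) (Fin d) ℂ) + (k : ℂ) • marg1 ⟨0, hk⟩ ρ) := by
  refine ⟨(k.factorial : ℂ), Nat.cast_ne_zero.mpr k.factorial_ne_zero, ?_⟩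
  ext a a'
  rw [Matrix.of_apply]
  have step1 : ∀ h : Fin k → Fin d,
      ((Matrix.of fun f g : Fin (k + 1) → Fin d =>
          (if f 0 = g 0 then (1 : ℂ) else 0) * ρ (f ∘ Fin.succ) (g ∘ Fin.succ)) *
        ∑ π : Equiv.Perm (Fin (k + 1)), Wperm π :
          Matrix (Fin (k + 1) → Fin d) (Fin (k + 1) → Fin d) ℂ)
        (Fin.cons a h) (Fin.cons a' h)
      = ∑ σ : Equiv.Perm (Fin (k + 1)),
          (if a = (Fin.cons a' h : Fin (k+1) → Fin d) (σ 0) then (1 : ℂ) else 0) *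
            ρ h (((Fin.cons a' h : Fin (k+1) → Fin d) ∘ ⇑σ) ∘ Fin.succ) := by
    intro h
    rw [Finset.mul_sum, Matrix.sum_apply]
    rw [← Equiv.sum_comp (Equiv.inv (Equiv.Perm (Fin (k + 1))))
      (fun σ => (if a = (Fin.cons a' h : Fin (k+1) → Fin d) (σ 0) then (1 : ℂ) else 0) *
        ρ h (((Fin.cons a' h : Fin (k+1) → Fin d) ∘ ⇑σ) ∘ Fin.succ))]
    refine Finset.sum_congr rfl fun π _ => ?_
    rw [mul_Wperm_apply]
    have hc : (Fin.cons a h : Fin (k+1) → Fin d) ∘ Fin.succ = h := by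
      ext j; simp
    simp only [Equiv.inv_apply, inv_inv, Matrix.of_apply, Function.comp_apply, Fin.cons_zero, hc]
  simp_rw [step1]
  rw [Finset.sum_comm]
  rw [← Equiv.sum_comp (Equiv.Perm.decomposeFin.symm)
    (fun σ : Equiv.Perm (Fin (k + 1)) => ∑ h : Fin k → Fin d,
      (if a = (Fin.cons a' h : Fin (k+1) → Fin d) (σ 0) then (1 : ℂ) else 0) *
        ρ h (((Fin.cons a' h : Fin (k+1) → Fin d) ∘ ⇑σ) ∘ Fin.succ))]
  rw [Fintype.sum_prod_type, Fin.sum_univ_succ]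
  have term0 : ∑ e : Equiv.Perm (Fin k), ∑ h : Fin k → Fin d,
      (if a = (Fin.cons a' h : Fin (k+1) → Fin d) ((Equiv.Perm.decomposeFin.symm ((0 : Fin (k+1)), e)) 0)
        then (1 : ℂ) else 0) *
        ρ h (((Fin.cons a' h : Fin (k+1) → Fin d) ∘ ⇑(Equiv.Perm.decomposeFin.symm ((0 : Fin (k+1)), e))) ∘ Fin.succ)
      = (k.factorial : ℂ) * ((if a = a' then (1 : ℂ) else 0) * ρ.trace) := by
    have inner : ∀ e : Equiv.Perm (Fin k), ∀ h : Fin k → Fin d,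
        (if a = (Fin.cons a' h : Fin (k+1) → Fin d) ((Equiv.Perm.decomposeFin.symm ((0 : Fin (k+1)), e)) 0)
          then (1 : ℂ) else 0) *
          ρ h (((Fin.cons a' h : Fin (k+1) → Fin d) ∘ ⇑(Equiv.Perm.decomposeFin.symm ((0 : Fin (k+1)), e))) ∘ Fin.succ)
        = (if a = a' then (1 : ℂ) else 0) * ρ h h := by
      intro e h
      rw [Equiv.Perm.decomposeFin_symm_apply_zero, Fin.cons_zero]
      congr 1
      have harg : ((Fin.cons a' h : Fin (k+1) → Fin d) ∘ ⇑(Equiv.Perm.decomposeFin.symm ((0 : Fin (k+1)), e)))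
          ∘ Fin.succ = h ∘ ⇑e := by
        ext j
        simp [Equiv.Perm.decomposeFin_symm_apply_succ, Fin.cons_succ]
      rw [harg, rho_right_inv ρ hsym e]
    simp_rw [inner]
    rw [Finset.sum_const, ← Finset.mul_sum]
    simp [Matrix.trace, Matrix.diag, Fintype.card_perm, mul_comm]
  have terms : ∀ i : Fin k, ∑ e : Equiv.Perm (Fin k), ∑ h : Fin k → Fin d,
      (if a = (Fin.cons a' h : Fin (k+1) → Fin d) ((Equiv.Perm.decomposeFin.symm (Fin.succ i, e)) 0)
        then (1 : ℂ) else 0) *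
        ρ h (((Fin.cons a' h : Fin (k+1) → Fin d) ∘ ⇑(Equiv.Perm.decomposeFin.symm (Fin.succ i, e))) ∘ Fin.succ)
      = (k.factorial : ℂ) * marg1 ⟨0, hk⟩ ρ a a' := by
    intro i
    have inner : ∀ e : Equiv.Perm (Fin k), ∀ h : Fin k → Fin d,
        (if a = (Fin.cons a' h : Fin (k+1) → Fin d) ((Equiv.Perm.decomposeFin.symm (Fin.succ i, e)) 0)
          then (1 : ℂ) else 0) *
          ρ h (((Fin.cons a' h : Fin (k+1) → Fin d) ∘ ⇑(Equiv.Perm.decomposeFin.symm (Fin.succ i, e))) ∘ Fin.succ)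
        = (if h i = a then (1 : ℂ) else 0) * ρ h (Function.update h i a') := by
      intro e h
      rw [Equiv.Perm.decomposeFin_symm_apply_zero, Fin.cons_succ]
      have harg : ((Fin.cons a' h : Fin (k+1) → Fin d) ∘ ⇑(Equiv.Perm.decomposeFin.symm (Fin.succ i, e)))
          ∘ Fin.succ = (Function.update h i a') ∘ ⇑e := by
        ext j
        simp only [Function.comp_apply, Equiv.Perm.decomposeFin_symm_apply_succ]
        by_cases hj : e j = i
        · rw [hj]; simp
        · rw [Equiv.swap_apply_of_ne_of_ne (Fin.succ_ne_zero _)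
            (fun hc => hj (Fin.succ_injective _ hc)), Fin.cons_succ,
            Function.update_apply, if_neg hj]
      rw [harg, rho_right_inv ρ hsym e]
      congr 1
      simp [eq_comm]
    simp_rw [inner]
    have hm : ∑ h : Fin k → Fin d,
        (if h i = a then (1 : ℂ) else 0) * ρ h (Function.update h i a')
        = marg1 ⟨0, hk⟩ ρ a a' := by
      rw [← marg1_invariant ρ hk hsym i]
      simp only [marg1, Matrix.of_apply]
      exact Finset.sum_congr rfl fun h _ => by rw [ite_mul, one_mul, zero_mul]
    rw [hm, Finset.sum_const, Finset.card_univ, Fintype.card_perm, Fintype.card_fin, nsmul_eq_mul]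
  rw [term0]
  rw [Finset.sum_congr rfl fun i _ => terms i, Finset.sum_const, Finset.card_univ,
    Fintype.card_fin, nsmul_eq_mul]
  simp only [Matrix.smul_apply, Matrix.add_apply, Matrix.one_apply, smul_eq_mul]
  by_cases hae : a = a' <;> simp [hae] <;> ring
end

section
/- If density matrices ρ_{AB_1}, ..., ρ_{AB_k} on H_A ⊗ H_B are consistent (i.e., there exists a global state on H_A ⊗ H_B^{⊗k} whose marginal on A, B_i equals ρ_{AB_i} for every i), then the average ρ_{AB} = (1/k) Σ_{i=1}^k ρ_{AB_i} has a k-symmetric extension. -/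
open Matrix Kronecker BigOperators
open scoped ComplexOrder

section Aux

variable {A B : Type*} [Fintype B] [DecidableEq B] {k : ℕ}

lemma update_comp_perm (π : Equiv.Perm (Fin k)) (f : Fin k → B) (i : Fin k) (c : B) :
    (Function.update f i c) ∘ ⇑π = Function.update (f ∘ ⇑π) (π⁻¹ i) c := by
  funext j
  simp only [Function.comp_apply, Function.update]
  by_cases hj : j = π⁻¹ i
  · subst hj; simp
  · have : ¬ (π j = i) := fun hc => hj (by simp [← hc])
    simp [hj, this]
    exact fun h => absurd h hj

/-- The reindexing map on the global system induced by a permutation of the B factors. -/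
def permMap (π : Equiv.Perm (Fin k)) (p : A × (Fin k → B)) : A × (Fin k → B) :=
  (p.1, p.2 ∘ ⇑π)

lemma permMap_bijective (π : Equiv.Perm (Fin k)) :
    Function.Bijective (permMap (A := A) (B := B) π) := by
  refine Function.bijective_iff_has_inverse.mpr ⟨permMap π⁻¹, fun p => ?_, fun p => ?_⟩ <;>
    · obtain ⟨a, f⟩ := p
      simp only [permMap]
      congr 1
      funext j
      simp

lemma comp_perm_bijective (π : Equiv.Perm (Fin k)) :
    Function.Bijective (fun f : Fin k → B => f ∘ ⇑π) :=
  Function.bijective_iff_has_inverse.mpr ⟨fun f => f ∘ ⇑π⁻¹,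
    fun f => by funext j; simp, fun f => by funext j; simp⟩

lemma margAB_submatrix (π : Equiv.Perm (Fin k))
    (ρ : Matrix (A × (Fin k → B)) (A × (Fin k → B)) ℂ) (i : Fin k) :
    margAB i (ρ.submatrix (permMap π) (permMap π)) = margAB (π⁻¹ i) ρ := by
  ext p q
  obtain ⟨a, b⟩ := p
  obtain ⟨a', b'⟩ := q
  simp only [margAB, Matrix.submatrix_apply, Matrix.of_apply, permMap]
  refine Fintype.sum_bijective (fun f : Fin k → B => f ∘ ⇑π)
    (comp_perm_bijective π) _ _ fun f => ?_
  have h1 : f i = (f ∘ ⇑π) (π⁻¹ i) := by simp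
  rw [update_comp_perm, h1]

lemma margAB_smul (i : Fin k) (c : ℂ)
    (ρ : Matrix (A × (Fin k → B)) (A × (Fin k → B)) ℂ) :
    margAB i (c • ρ) = c • margAB i ρ := by
  ext p q
  simp [margAB, Finset.mul_sum, mul_ite]

lemma margAB_sum {ι : Type*} (s : Finset ι) (i : Fin k)
    (ρ : ι → Matrix (A × (Fin k → B)) (A × (Fin k → B)) ℂ) :
    margAB i (∑ j ∈ s, ρ j) = ∑ j ∈ s, margAB i (ρ j) := by
  ext p q
  simp only [margAB, Matrix.of_apply, Matrix.sum_apply]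
  rw [Finset.sum_comm]
  refine Finset.sum_congr rfl fun f _ => ?_
  split_ifs with hf <;> simp

lemma posSemidef_smul_nonneg {n : Type*} [Fintype n] {M : Matrix n n ℂ}
    (hM : M.PosSemidef) {c : ℂ} (hc : 0 ≤ c) : (c • M).PosSemidef := by
  constructor
  · unfold Matrix.IsHermitian
    rw [Matrix.conjTranspose_smul, hM.1.eq]
    congr 1
    simpa using (Complex.conj_eq_iff_im.mpr (Complex.le_def.mp hc).2.symm)
  · intro x
    exact (hM.smul hc).2 x

lemma trace_submatrix_bij {m n : Type*} [Fintype m] [Fintype n] (M : Matrix n n ℂ)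
    (e : m → n) (he : Function.Bijective e) : (M.submatrix e e).trace = M.trace := by
  simp only [Matrix.trace, Matrix.diag, Matrix.submatrix_apply]
  exact Fintype.sum_bijective e he _ _ (fun x => rfl)

end Aux

/-- If the marginals `ρ_{AB_i}` are consistent then their average has a `k`-symmetric
extension. -/
theorem stmt7 {A B : Type*} [Fintype A] [Fintype B] [DecidableEq B] {k : ℕ}
    (ρs : Fin k → Matrix (A × B) (A × B) ℂ)
    (h : ∃ ρG : Matrix (A × (Fin k → B)) (A × (Fin k → B)) ℂ,
      IsDensity ρG ∧ ∀ i : Fin k, margAB i ρG = ρs i) :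
    HasSymExt k ((k : ℂ)⁻¹ • ∑ i, ρs i) := by
  obtain ⟨ρG, hρG, hmarg⟩ := h
  rcases Nat.eq_zero_or_pos k with hk | hk
  · subst hk
    exact ⟨ρG, hρG, fun i => i.elim0⟩
  haveI : NeZero k := ⟨hk.ne'⟩
  set π : Fin k → Equiv.Perm (Fin k) := fun j => Equiv.addLeft j with hπ
  refine ⟨(k : ℂ)⁻¹ • ∑ j : Fin k, ρG.submatrix (permMap (π j)) (permMap (π j)),
    ⟨?_, ?_⟩, ?_⟩
  · have h0 : (0:ℂ) ≤ (k:ℂ)⁻¹ := by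
      rw [show ((k:ℂ))⁻¹ = (((k:ℝ)⁻¹ : ℝ) : ℂ) by push_cast; ring]
      exact_mod_cast inv_nonneg.mpr (Nat.cast_nonneg k)
    refine posSemidef_smul_nonneg ?_ h0
    refine Finset.sum_induction _ _ (fun a b ha hb => ha.add hb)
      Matrix.PosSemidef.zero (fun j _ => ?_)
    exact hρG.1.submatrix _
  · rw [Matrix.trace_smul, Matrix.trace_sum]
    have : ∀ j : Fin k, (ρG.submatrix (permMap (π j)) (permMap (π j))).trace = 1 := by
      intro j
      rw [trace_submatrix_bij _ _ (permMap_bijective _), hρG.2]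
    simp only [this, Finset.sum_const, Finset.card_univ, Fintype.card_fin, nsmul_eq_mul]
    rw [smul_eq_mul, mul_one, inv_mul_cancel₀ (Nat.cast_ne_zero.mpr hk.ne' : (k:ℂ) ≠ 0)]
  · intro i
    rw [margAB_smul, margAB_sum]
    congr 1
    have h1 : ∀ j : Fin k,
        margAB i (ρG.submatrix (permMap (π j)) (permMap (π j))) = ρs ((π j)⁻¹ i) := by
      intro j
      rw [margAB_submatrix, hmarg]
    simp only [h1]
    refine Fintype.sum_bijective (fun j : Fin k => (π j)⁻¹ i)
      ?_ _ _ (fun j => rfl)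
    refine Function.bijective_iff_has_inverse.mpr ⟨fun m => i - m, fun j => ?_, fun m => ?_⟩ <;>
      simp [hπ, Equiv.Perm.inv_def]
end

section
/- If a two-qudit Werner state ρ_W(t) has a k-symmetric extension, then t ≥ −d/k. -/
set_option linter.unusedSectionVars false
set_option maxHeartbeats 1000000


open Matrix Kronecker BigOperators
open scoped ComplexOrder

/-- The swap operator on `ℂ^d ⊗ ℂ^d`. -/
noncomputable def swapM (d : ℕ) : Matrix (Fin d × Fin d) (Fin d × Fin d) ℂ :=
  Matrix.of fun p q => if p.1 = q.2 ∧ p.2 = q.1 then 1 else 0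

/-- The two-qudit Werner state
`ρ_W(t) = ((1+t)/2) ρ⁺ + ((1−t)/2) ρ⁻`, where `ρ⁺`, `ρ⁻` are the normalized
projections onto the symmetric and antisymmetric subspaces. -/
noncomputable def wernerState (d : ℕ) (t : ℝ) : Matrix (Fin d × Fin d) (Fin d × Fin d) ℂ :=
  (((1 + t) / 2 : ℝ) : ℂ) • ((d * (d + 1) / 2 : ℂ))⁻¹ • ((2 : ℂ)⁻¹ • (1 + swapM d)) +
  (((1 - t) / 2 : ℝ) : ℂ) • ((d * ((d : ℂ) - 1) / 2 : ℂ))⁻¹ • ((2 : ℂ)⁻¹ • (1 - swapM d))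

namespace Stmt10

lemma trace_eq_sum {n : Type*} [Fintype n] (A : Matrix n n ℂ) :
    A.trace = ∑ i, A i i := rfl

variable {W : Type*} [Fintype W] [DecidableEq W]

noncomputable def permMat (e : Equiv.Perm W) : Matrix W W ℂ :=
  Matrix.of fun x y => if x = e y then 1 else 0

lemma permMat_apply (e : Equiv.Perm W) (x y : W) :
    permMat e x y = if x = e y then 1 else 0 := rfl

lemma permMat_one : permMat (1 : Equiv.Perm W) = 1 := by
  ext x y
  simp [permMat_apply, Matrix.one_apply]
  exact if_congr Iff.rfl rfl rfl

lemma permMat_mul (e f : Equiv.Perm W) :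
    permMat e * permMat f = permMat (e * f) := by
  ext x z
  simp only [Matrix.mul_apply, permMat_apply]
  rw [Finset.sum_eq_single (f z)]
  · simp [Equiv.Perm.mul_apply]
    exact if_congr Iff.rfl rfl rfl
  · intro y _ hy
    simp [hy]
  · simp

lemma permMat_mulVec (e : Equiv.Perm W) (g : W → ℂ) :
    (permMat e) *ᵥ g = fun x => g (e⁻¹ x) := by
  funext x
  simp only [Matrix.mulVec, dotProduct, permMat_apply]
  rw [Finset.sum_eq_single (e⁻¹ x)]
  · simp
  · intro y _ hy
    have : ¬ (x = e y) := by
      intro hxy; apply hy; simp [hxy]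
    simp [this]
  · simp

lemma permMat_conjTranspose (e : Equiv.Perm W) :
    (permMat e)ᴴ = permMat e⁻¹ := by
  ext x y
  simp only [Matrix.conjTranspose_apply, permMat_apply]
  have : (y = e x) ↔ (x = e⁻¹ y) := by
    constructor
    · intro h; simp [h]
    · intro h; simp [h]
  simp only [this]
  split <;> simp

lemma sum_mulVec {ι : Type*} (s : Finset ι) (M : ι → Matrix W W ℂ) (g : W → ℂ) :
    (∑ γ ∈ s, M γ) *ᵥ g = ∑ γ ∈ s, (M γ) *ᵥ g := by
  ext x
  simp only [Matrix.mulVec, dotProduct, Finset.sum_apply, Matrix.sum_apply]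
  rw [Finset.sum_comm]
  refine Finset.sum_congr rfl fun y _ => ?_
  rw [Finset.sum_mul]

lemma dot_sum {ι : Type*} (s : Finset ι) (v : W → ℂ) (w : ι → (W → ℂ)) :
    v ⬝ᵥ (∑ γ ∈ s, w γ) = ∑ γ ∈ s, v ⬝ᵥ w γ := by
  simp only [dotProduct, Finset.sum_apply, Finset.mul_sum]
  rw [Finset.sum_comm]

section GroupPos

variable {Γ : Type*} [Group Γ] [Fintype Γ] [DecidableEq Γ] (a : Γ →* Equiv.Perm W)

/-- number of fixed points -/
noncomputable def tco (γ : Γ) : ℕ := (Finset.univ.filter fun x : W => a γ x = x).card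

noncomputable def uu (g : W → ℂ) (γ : Γ) : ℂ := ∑ x, (starRingEnd ℂ) (g x) * g (a γ x)

noncomputable def Afn (g : W → ℂ) (f h h₀ : W) : ℂ :=
  ∑ γ, g (a γ f) * (if a γ h = h₀ then 1 else 0)

noncomputable def bigD : Matrix W W ℂ := ∑ γ, (tco a γ : ℂ) • permMat (a γ)

lemma tco_inv (γ : Γ) : tco a γ⁻¹ = tco a γ := by
  unfold tco
  congr 1
  apply Finset.filter_congr
  intro x _
  rw [map_inv]
  constructor
  · intro hx
    conv_lhs => rw [← hx]
    simp
  · intro hx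
    conv_lhs => rw [← hx]
    simp

lemma sum_boole_ite (p : W → Prop) [DecidablePred p] :
    ∑ x : W, (if p x then (1:ℂ) else 0) = ((Finset.univ.filter p).card : ℂ) := by
  simp [Finset.sum_boole]

lemma sum_ite_ite (u v : W) :
    ∑ h₀ : W, (if u = h₀ then (1:ℂ) else 0) * (if v = h₀ then 1 else 0)
      = if u = v then 1 else 0 := by
  rw [Finset.sum_eq_single u]
  · simp [eq_comm]
  · intro y _ hy
    simp [Ne.symm hy]
  · simp

lemma step1 (g : W → ℂ) (f h : W) :
    ∑ h₀ : W, (Afn a g f h h₀ * (starRingEnd ℂ) (Afn a g f h h₀))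
      = ∑ γ : Γ, ∑ γ' : Γ, (g (a γ f) * (starRingEnd ℂ) (g (a γ' f)))
          * (if a γ h = a γ' h then 1 else 0) := by
  unfold Afn
  have expand : ∀ h₀ : W,
      (∑ γ : Γ, g (a γ f) * (if a γ h = h₀ then (1:ℂ) else 0))
        * (starRingEnd ℂ) (∑ γ' : Γ, g (a γ' f) * (if a γ' h = h₀ then (1:ℂ) else 0))
      = ∑ γ : Γ, ∑ γ' : Γ, (g (a γ f) * (starRingEnd ℂ) (g (a γ' f)))
          * ((if a γ h = h₀ then (1:ℂ) else 0) * (if a γ' h = h₀ then (1:ℂ) else 0)) := by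
    intro h₀
    rw [map_sum, Finset.sum_mul_sum]
    apply Finset.sum_congr rfl
    intro γ _
    apply Finset.sum_congr rfl
    intro γ' _
    rw [_root_.map_mul]
    have : (starRingEnd ℂ) (if a γ' h = h₀ then (1:ℂ) else 0)
        = (if a γ' h = h₀ then (1:ℂ) else 0) := by
      split <;> simp
    rw [this]
    ring
  calc ∑ h₀ : W, (∑ γ : Γ, g (a γ f) * (if a γ h = h₀ then (1:ℂ) else 0))
        * (starRingEnd ℂ) (∑ γ' : Γ, g (a γ' f) * (if a γ' h = h₀ then (1:ℂ) else 0))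
      = ∑ h₀ : W, ∑ γ : Γ, ∑ γ' : Γ, (g (a γ f) * (starRingEnd ℂ) (g (a γ' f)))
          * ((if a γ h = h₀ then (1:ℂ) else 0) * (if a γ' h = h₀ then (1:ℂ) else 0)) := by
        exact Finset.sum_congr rfl fun h₀ _ => expand h₀
    _ = ∑ γ : Γ, ∑ γ' : Γ, (g (a γ f) * (starRingEnd ℂ) (g (a γ' f)))
          * ∑ h₀ : W, ((if a γ h = h₀ then (1:ℂ) else 0) * (if a γ' h = h₀ then (1:ℂ) else 0)) := by
        rw [Finset.sum_comm]
        apply Finset.sum_congr rfl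
        intro γ _
        rw [Finset.sum_comm]
        apply Finset.sum_congr rfl
        intro γ' _
        rw [Finset.mul_sum]
    _ = _ := by
        apply Finset.sum_congr rfl; intro γ _
        apply Finset.sum_congr rfl; intro γ' _
        rw [sum_ite_ite]

lemma step2 (g : W → ℂ) :
    ∑ f : W, ∑ h : W, ∑ h₀ : W, (Afn a g f h h₀ * (starRingEnd ℂ) (Afn a g f h h₀))
      = ∑ γ : Γ, ∑ γ' : Γ, (∑ f : W, g (a γ f) * (starRingEnd ℂ) (g (a γ' f)))
          * (∑ h : W, if a γ h = a γ' h then (1:ℂ) else 0) := by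
  have e1 : ∀ f : W, ∑ h : W, ∑ h₀ : W, (Afn a g f h h₀ * (starRingEnd ℂ) (Afn a g f h h₀))
      = ∑ γ : Γ, ∑ γ' : Γ, (g (a γ f) * (starRingEnd ℂ) (g (a γ' f)))
          * (∑ h : W, if a γ h = a γ' h then (1:ℂ) else 0) := by
    intro f
    calc ∑ h : W, ∑ h₀ : W, (Afn a g f h h₀ * (starRingEnd ℂ) (Afn a g f h h₀))
        = ∑ h : W, ∑ γ : Γ, ∑ γ' : Γ, (g (a γ f) * (starRingEnd ℂ) (g (a γ' f)))
            * (if a γ h = a γ' h then (1:ℂ) else 0) := by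
          exact Finset.sum_congr rfl fun h _ => step1 a g f h
      _ = ∑ γ : Γ, ∑ h : W, ∑ γ' : Γ, (g (a γ f) * (starRingEnd ℂ) (g (a γ' f)))
            * (if a γ h = a γ' h then (1:ℂ) else 0) := Finset.sum_comm
      _ = ∑ γ : Γ, ∑ γ' : Γ, ∑ h : W, (g (a γ f) * (starRingEnd ℂ) (g (a γ' f)))
            * (if a γ h = a γ' h then (1:ℂ) else 0) := by
          exact Finset.sum_congr rfl fun γ _ => Finset.sum_comm
      _ = ∑ γ : Γ, ∑ γ' : Γ, (g (a γ f) * (starRingEnd ℂ) (g (a γ' f)))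
            * (∑ h : W, if a γ h = a γ' h then (1:ℂ) else 0) := by
          refine Finset.sum_congr rfl fun γ _ => Finset.sum_congr rfl fun γ' _ => ?_
          rw [Finset.mul_sum]
  calc ∑ f : W, ∑ h : W, ∑ h₀ : W, (Afn a g f h h₀ * (starRingEnd ℂ) (Afn a g f h h₀))
      = ∑ f : W, ∑ γ : Γ, ∑ γ' : Γ, (g (a γ f) * (starRingEnd ℂ) (g (a γ' f)))
          * (∑ h : W, if a γ h = a γ' h then (1:ℂ) else 0) := by
        exact Finset.sum_congr rfl fun f _ => e1 f
    _ = ∑ γ : Γ, ∑ f : W, ∑ γ' : Γ, _ := Finset.sum_comm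
    _ = ∑ γ : Γ, ∑ γ' : Γ, ∑ f : W, (g (a γ f) * (starRingEnd ℂ) (g (a γ' f)))
          * (∑ h : W, if a γ h = a γ' h then (1:ℂ) else 0) := by
        exact Finset.sum_congr rfl fun γ _ => Finset.sum_comm
    _ = _ := by
        refine Finset.sum_congr rfl fun γ _ => Finset.sum_congr rfl fun γ' _ => ?_
        rw [Finset.sum_mul]

lemma key_identity (g : W → ℂ) :
    ∑ f : W, ∑ h : W, ∑ h₀ : W, (Afn a g f h h₀ * (starRingEnd ℂ) (Afn a g f h h₀))
      = (Fintype.card Γ : ℂ) * ∑ γ : Γ, (tco a γ : ℂ) * uu a g γ := by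
  rw [step2]
  have inner : ∀ γ' : Γ, ∑ γ : Γ, (∑ f : W, g (a γ f) * (starRingEnd ℂ) (g (a γ' f)))
          * (∑ h : W, if a γ h = a γ' h then (1:ℂ) else 0)
      = ∑ β : Γ, (tco a β : ℂ) * uu a g β := by
    intro γ'
    rw [← Equiv.sum_comp (Equiv.mulRight γ')
      (fun γ => (∑ f : W, g (a γ f) * (starRingEnd ℂ) (g (a γ' f)))
          * (∑ h : W, if a γ h = a γ' h then (1:ℂ) else 0))]
    refine Finset.sum_congr rfl fun β _ => ?_
    have hmul : ∀ x : W, a ((Equiv.mulRight γ') β) x = a β (a γ' x) := by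
      intro x
      simp [_root_.map_mul, Equiv.Perm.mul_apply]
    have hf : ∑ f : W, g (a ((Equiv.mulRight γ') β) f) * (starRingEnd ℂ) (g (a γ' f))
        = uu a g β := by
      simp only [hmul]
      rw [Equiv.sum_comp (a γ') (fun y => g (a β y) * (starRingEnd ℂ) (g y))]
      unfold uu
      exact Finset.sum_congr rfl fun y _ => mul_comm _ _
    have hh : (∑ h : W, if a ((Equiv.mulRight γ') β) h = a γ' h then (1:ℂ) else 0)
        = (tco a β : ℂ) := by
      simp only [hmul]
      rw [Equiv.sum_comp (a γ') (fun y => if a β y = y then (1:ℂ) else 0)]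
      unfold tco
      rw [sum_boole_ite]
    rw [hf, hh, mul_comm]
  calc ∑ γ : Γ, ∑ γ' : Γ, (∑ f : W, g (a γ f) * (starRingEnd ℂ) (g (a γ' f)))
          * (∑ h : W, if a γ h = a γ' h then (1:ℂ) else 0)
      = ∑ γ' : Γ, ∑ γ : Γ, (∑ f : W, g (a γ f) * (starRingEnd ℂ) (g (a γ' f)))
          * (∑ h : W, if a γ h = a γ' h then (1:ℂ) else 0) := Finset.sum_comm
    _ = ∑ γ' : Γ, ∑ β : Γ, (tco a β : ℂ) * uu a g β := by
        exact Finset.sum_congr rfl fun γ' _ => inner γ'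
    _ = (Fintype.card Γ : ℂ) * ∑ β : Γ, (tco a β : ℂ) * uu a g β := by
        rw [Finset.sum_const, Finset.card_univ, nsmul_eq_mul]
  
lemma quad_as_uu (g : W → ℂ) :
    star g ⬝ᵥ (bigD a) *ᵥ g = ∑ γ : Γ, (tco a γ : ℂ) * uu a g γ := by
  unfold bigD
  rw [sum_mulVec, dot_sum]
  have term : ∀ γ : Γ, star g ⬝ᵥ ((tco a γ : ℂ) • permMat (a γ)) *ᵥ g
      = (tco a γ : ℂ) * uu a g (γ⁻¹) := by
    intro γ
    rw [Matrix.smul_mulVec, dotProduct_smul, permMat_mulVec]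
    rw [smul_eq_mul]
    congr 1
    unfold uu
    rw [map_inv]
    simp only [dotProduct, Pi.star_apply, RCLike.star_def]
  rw [Finset.sum_congr rfl fun γ _ => term γ]
  rw [← Equiv.sum_comp (Equiv.inv Γ) (fun γ => (tco a γ : ℂ) * uu a g (γ⁻¹))]
  refine Finset.sum_congr rfl fun γ _ => ?_
  simp [tco_inv]

lemma quad_real (g : W → ℂ) :
    star g ⬝ᵥ (bigD a) *ᵥ g
      = (((∑ f : W, ∑ h : W, ∑ h₀ : W, Complex.normSq (Afn a g f h h₀))
          / (Fintype.card Γ) : ℝ) : ℂ) := by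
  have hcard : ((Fintype.card Γ : ℝ) : ℂ) ≠ 0 := by
    have : (0:ℝ) < (Fintype.card Γ : ℝ) := by exact_mod_cast Fintype.card_pos
    exact_mod_cast this.ne'
  have lhsval : ∑ f : W, ∑ h : W, ∑ h₀ : W, (Afn a g f h h₀ * (starRingEnd ℂ) (Afn a g f h h₀))
      = (((∑ f : W, ∑ h : W, ∑ h₀ : W, Complex.normSq (Afn a g f h h₀)) : ℝ) : ℂ) := by
    push_cast
    refine Finset.sum_congr rfl fun f _ => Finset.sum_congr rfl fun h _ =>
      Finset.sum_congr rfl fun h₀ _ => ?_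
    rw [Complex.mul_conj]
  have key2 : ((Fintype.card Γ : ℝ) : ℂ) * (star g ⬝ᵥ (bigD a) *ᵥ g)
      = (((∑ f : W, ∑ h : W, ∑ h₀ : W, Complex.normSq (Afn a g f h h₀)) : ℝ) : ℂ) := by
    rw [quad_as_uu, ← lhsval, key_identity]
    push_cast
    ring
  rw [Complex.ofReal_div]
  rw [eq_div_iff hcard]
  rw [mul_comm] at key2
  exact key2

lemma Afn_diag (g : W → ℂ) (f h₀ : W) :
    Afn a g f f h₀ = ((Finset.univ.filter fun γ : Γ => a γ f = h₀).card : ℂ) * g h₀ := by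
  unfold Afn
  have : ∀ γ : Γ, g (a γ f) * (if a γ f = h₀ then (1:ℂ) else 0)
      = (if a γ f = h₀ then (1:ℂ) else 0) * g h₀ := by
    intro γ
    by_cases hc : a γ f = h₀
    · rw [hc]; simp [mul_comm]
    · simp [hc]
  rw [Finset.sum_congr rfl fun γ _ => this γ, ← Finset.sum_mul]
  congr 1
  exact sum_boole_ite _

lemma sum_mcount (h₀ : W) :
    ∑ f : W, ((Finset.univ.filter fun γ : Γ => a γ f = h₀).card) = Fintype.card Γ := by
  have : ∀ f : W, ((Finset.univ.filter fun γ : Γ => a γ f = h₀).card)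
      = ∑ γ : Γ, (if a γ f = h₀ then 1 else 0) := by
    intro f
    rw [Finset.sum_boole]
    simp
  rw [Finset.sum_congr rfl fun f _ => this f, Finset.sum_comm]
  have inner : ∀ γ : Γ, ∑ f : W, (if a γ f = h₀ then 1 else 0) = 1 := by
    intro γ
    rw [Finset.sum_eq_single ((a γ)⁻¹ h₀)]
    · simp
    · intro f _ hf
      have : ¬ (a γ f = h₀) := by
        intro hc; apply hf; rw [← hc]; simp
      simp [this]
    · simp
  rw [Finset.sum_congr rfl fun γ _ => inner γ]
  simp

lemma lower_bound (g : W → ℂ) :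
    (Fintype.card Γ : ℝ) * ∑ x : W, Complex.normSq (g x)
      ≤ ∑ f : W, ∑ h : W, ∑ h₀ : W, Complex.normSq (Afn a g f h h₀) := by
  have stepA : ∀ f : W, ∑ h₀ : W, Complex.normSq (Afn a g f f h₀)
      ≤ ∑ h : W, ∑ h₀ : W, Complex.normSq (Afn a g f h h₀) := by
    intro f
    refine Finset.single_le_sum (f := fun h => ∑ h₀ : W, Complex.normSq (Afn a g f h h₀))
      (fun h _ => ?_) (Finset.mem_univ f)
    exact Finset.sum_nonneg fun h₀ _ => Complex.normSq_nonneg _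
  have stepB : ∀ f h₀ : W, ((Finset.univ.filter fun γ : Γ => a γ f = h₀).card : ℝ)
        * Complex.normSq (g h₀) ≤ Complex.normSq (Afn a g f f h₀) := by
    intro f h₀
    rw [Afn_diag]
    set m : ℕ := (Finset.univ.filter fun γ : Γ => a γ f = h₀).card with hm
    rw [Complex.normSq_mul]
    have : Complex.normSq ((m:ℂ)) = (m:ℝ)^2 := by
      rw [Complex.normSq_natCast]
      ring
    rw [this]
    have hmn : m ≤ m^2 := Nat.le_self_pow (by norm_num) m
    have hmm : (m:ℝ) ≤ (m:ℝ)^2 := by exact_mod_cast hmn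
    nlinarith [Complex.normSq_nonneg (g h₀), hmm]
  calc (Fintype.card Γ : ℝ) * ∑ x : W, Complex.normSq (g x)
      = ∑ h₀ : W, (Fintype.card Γ : ℝ) * Complex.normSq (g h₀) := by
        rw [Finset.mul_sum]
    _ = ∑ h₀ : W, ∑ f : W, ((Finset.univ.filter fun γ : Γ => a γ f = h₀).card : ℝ)
          * Complex.normSq (g h₀) := by
        refine Finset.sum_congr rfl fun h₀ _ => ?_
        rw [← Finset.sum_mul]
        congr 1
        rw [← Nat.cast_sum]
        rw [sum_mcount]
    _ = ∑ f : W, ∑ h₀ : W, ((Finset.univ.filter fun γ : Γ => a γ f = h₀).card : ℝ)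
          * Complex.normSq (g h₀) := Finset.sum_comm
    _ ≤ ∑ f : W, ∑ h₀ : W, Complex.normSq (Afn a g f f h₀) := by
        refine Finset.sum_le_sum fun f _ => Finset.sum_le_sum fun h₀ _ => stepB f h₀
    _ ≤ _ := Finset.sum_le_sum fun f _ => stepA f

lemma bigD_hermitian : (bigD a).IsHermitian := by
  unfold Matrix.IsHermitian bigD
  rw [Matrix.conjTranspose_sum]
  rw [← Equiv.sum_comp (Equiv.inv Γ) (fun γ => (tco a γ : ℂ) • permMat (a γ))]
  refine Finset.sum_congr rfl fun γ _ => ?_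
  rw [Matrix.conjTranspose_smul, permMat_conjTranspose, ← map_inv]
  simp only [Equiv.inv_apply]
  rw [tco_inv, star_natCast]

lemma bigD_quad_eq_real (g : W → ℂ) :
    ∃ r : ℝ, star g ⬝ᵥ (bigD a) *ᵥ g = (r : ℂ) ∧ ∑ x : W, Complex.normSq (g x) ≤ r := by
  refine ⟨_, quad_real a g, ?_⟩
  have hcard : (0:ℝ) < (Fintype.card Γ : ℝ) := by exact_mod_cast Fintype.card_pos
  rw [le_div_iff₀ hcard]
  calc (∑ x : W, Complex.normSq (g x)) * (Fintype.card Γ : ℝ)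
      = (Fintype.card Γ : ℝ) * ∑ x : W, Complex.normSq (g x) := by ring
    _ ≤ _ := lower_bound a g

lemma bigD_posSemidef : (bigD a).PosSemidef := by
  refine .of_dotProduct_mulVec_nonneg (bigD_hermitian a) fun g => ?_
  obtain ⟨r, hr, hge⟩ := bigD_quad_eq_real a g
  rw [hr]
  have : (0:ℝ) ≤ r :=
    le_trans (Finset.sum_nonneg fun x _ => Complex.normSq_nonneg _) hge
  exact_mod_cast this

end GroupPos

section Core

variable (d k : ℕ)

/-- The permutation action on `Option (Fin k) → Fin d`. -/
noncomputable def homA : Equiv.Perm (Option (Fin k)) →* Equiv.Perm (Option (Fin k) → Fin d) where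
  toFun σ := Equiv.arrowCongr σ (Equiv.refl (Fin d))
  map_one' := by
    ext f x
    simp
    rfl
  map_mul' σ τ := by
    ext f x
    rfl

lemma homA_apply (σ : Equiv.Perm (Option (Fin k))) (f : Option (Fin k) → Fin d)
    (x : Option (Fin k)) : homA d k σ f x = f (σ.symm x) := rfl

/-- optionCongr as a monoid hom. -/
noncomputable def homB : Equiv.Perm (Fin k) →* Equiv.Perm (Option (Fin k)) where
  toFun := Equiv.optionCongr
  map_one' := Equiv.optionCongr_one
  map_mul' σ τ := by
    ext x
    cases x <;> simp [Equiv.Perm.mul_apply]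

lemma fix_iff (σ : Equiv.Perm (Option (Fin k))) (f : Option (Fin k) → Fin d) :
    homA d k σ f = f ↔ ∀ x, f (σ x) = f x := by
  constructor
  · intro hf x
    have h1 : homA d k σ f (σ x) = f (σ x) := congrFun hf (σ x)
    rw [homA_apply, Equiv.symm_apply_apply] at h1
    exact h1.symm
  · intro hf
    funext x
    rw [homA_apply]
    have h1 := hf (σ.symm x)
    rw [Equiv.apply_symm_apply] at h1
    exact h1.symm

lemma tco_homA_eq (σ : Equiv.Perm (Option (Fin k))) :
    tco (homA d k) σ
      = (Finset.univ.filter fun f : Option (Fin k) → Fin d => ∀ x, f (σ x) = f x).card := by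
  unfold tco
  congr 1
  apply Finset.filter_congr
  intro f _
  exact fix_iff d k σ f

lemma swap_optC_none (i : Fin k) (τ : Equiv.Perm (Fin k)) :
    (Equiv.swap (none : Option (Fin k)) (some i) * Equiv.optionCongr τ) none = some i := by
  simp [Equiv.Perm.mul_apply]

lemma swap_optC_some (i : Fin k) (τ : Equiv.Perm (Fin k)) (j : Fin k) :
    (Equiv.swap (none : Option (Fin k)) (some i) * Equiv.optionCongr τ) (some j)
      = if τ j = i then none else some (τ j) := by
  by_cases hji : τ j = i
  · simp [Equiv.Perm.mul_apply, hji]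
  · have h1 : (some (τ j) : Option (Fin k)) ≠ none := by simp
    have h2 : (some (τ j) : Option (Fin k)) ≠ some i := by simpa using hji
    simp [Equiv.Perm.mul_apply, Equiv.swap_apply_of_ne_of_ne h1 h2, hji]

lemma tco_swap_mul (i : Fin k) (τ : Equiv.Perm (Fin k)) :
    d * tco (homA d k) (Equiv.swap none (some i) * Equiv.optionCongr τ)
      = tco (homA d k) (Equiv.optionCongr τ) := by
  classical
  rw [tco_homA_eq, tco_homA_eq]
  have hcard :
      ((Finset.univ.filter fun f : Option (Fin k) → Fin d =>
          ∀ x, f ((Equiv.swap none (some i) * Equiv.optionCongr τ) x) = f x)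
        ×ˢ (Finset.univ : Finset (Fin d))).card
      = (Finset.univ.filter fun f : Option (Fin k) → Fin d =>
          ∀ x, f (Equiv.optionCongr τ x) = f x).card := by
    apply Finset.card_nbij'
      (i := fun p => Function.update p.1 none p.2)
      (j := fun g => (Function.update g none (g (some i)), g none))
    · -- forward maps into S2
      rintro ⟨f, v⟩ hp
      simp only [Finset.mem_coe, Finset.mem_product, Finset.mem_filter, Finset.mem_univ, true_and] at hp
      obtain ⟨hf, -⟩ := hp
      simp only [Finset.mem_coe, Finset.mem_filter, Finset.mem_univ, true_and]
      intro x
      cases x with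
      | none => simp
      | some j =>
        have hne1 : (some (τ j) : Option (Fin k)) ≠ none := by simp
        have hne2 : (some j : Option (Fin k)) ≠ none := by simp
        simp only [Equiv.optionCongr_apply, Option.map_some]
        rw [Function.update_of_ne hne1, Function.update_of_ne hne2]
        have hj := hf (some j)
        rw [swap_optC_some] at hj
        by_cases hji : τ j = i
        · rw [hji]
          have h0 := hf none
          rw [swap_optC_none] at h0
          rw [if_pos hji] at hj
          rw [h0, hj]
        · rw [if_neg hji] at hj
          exact hj
    · -- backward maps into S1 x univ
      intro g hg
      simp only [Finset.mem_coe, Finset.mem_filter, Finset.mem_univ, true_and] at hg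
      simp only [Finset.mem_coe, Finset.mem_product, Finset.mem_filter, Finset.mem_univ, true_and, and_true]
      intro x
      cases x with
      | none =>
        rw [swap_optC_none]
        have hne : (some i : Option (Fin k)) ≠ none := by simp
        rw [Function.update_of_ne hne, Function.update_self]
      | some j =>
        have hne2 : (some j : Option (Fin k)) ≠ none := by simp
        rw [Function.update_of_ne hne2, swap_optC_some]
        by_cases hji : τ j = i
        · rw [if_pos hji, Function.update_self]
          have hgj := hg (some j)
          simp only [Equiv.optionCongr_apply, Option.map_some] at hgj
          rw [hji] at hgj
          exact hgj
        · rw [if_neg hji]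
          have hne1 : (some (τ j) : Option (Fin k)) ≠ none := by simp
          rw [Function.update_of_ne hne1]
          have hgj := hg (some j)
          simp only [Equiv.optionCongr_apply, Option.map_some] at hgj
          exact hgj
    · -- left inverse
      rintro ⟨f, v⟩ hp
      simp only [Finset.mem_coe, Finset.mem_product, Finset.mem_filter, Finset.mem_univ, true_and] at hp
      obtain ⟨hf, -⟩ := hp
      have h0 := hf none
      rw [swap_optC_none] at h0
      dsimp only
      have e1 : Function.update f none v (some i) = f (some i) := by
        rw [Function.update_of_ne (by simp)]
      have e2 : Function.update f none v none = v := Function.update_self _ _ _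
      rw [Prod.mk.injEq]
      constructor
      · rw [e1, Function.update_idem, h0, Function.update_eq_self]
      · exact e2
    · -- right inverse
      intro g hg
      dsimp only
      rw [Function.update_idem, Function.update_eq_self]
  rw [← hcard, Finset.card_product]
  simp [mul_comm]

noncomputable def Dfull : Matrix (Option (Fin k) → Fin d) (Option (Fin k) → Fin d) ℂ :=
  bigD (homA d k)

noncomputable def DH : Matrix (Option (Fin k) → Fin d) (Option (Fin k) → Fin d) ℂ :=
  bigD ((homA d k).comp (homB k))

noncomputable def XX : Matrix (Option (Fin k) → Fin d) (Option (Fin k) → Fin d) ℂ :=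
  ∑ i : Fin k, permMat (homA d k (Equiv.swap none (some i)))

lemma decomp : (d:ℂ) • Dfull d k = ((d:ℂ) • 1 + XX d k) * DH d k := by
  have hDfull : Dfull d k
      = ∑ p : Option (Fin k) × Equiv.Perm (Fin k),
          (tco (homA d k) (Equiv.swap none p.1 * Equiv.optionCongr p.2) : ℂ)
            • permMat (homA d k (Equiv.swap none p.1 * Equiv.optionCongr p.2)) := by
    unfold Dfull bigD
    rw [← Equiv.sum_comp (Equiv.Perm.decomposeOption
        (α := Fin k)).symm
      (fun σ => (tco (homA d k) σ : ℂ) • permMat (homA d k σ))]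
    refine Finset.sum_congr rfl fun p _ => ?_
    rw [Equiv.Perm.decomposeOption_symm_apply]
  rw [hDfull, Fintype.sum_prod_type, Fintype.sum_option]
  have hnone : ∀ τ : Equiv.Perm (Fin k),
      Equiv.swap (none : Option (Fin k)) none * Equiv.optionCongr τ = Equiv.optionCongr τ := by
    intro τ
    rw [Equiv.swap_self]
    ext x
    simp [Equiv.Perm.mul_apply]
  have hDH : DH d k = ∑ τ : Equiv.Perm (Fin k),
      (tco (homA d k) (Equiv.optionCongr τ) : ℂ) • permMat (homA d k (Equiv.optionCongr τ)) := by
    unfold DH bigD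
    rfl
  rw [smul_add]
  have part1 : (d:ℂ) • ∑ τ : Equiv.Perm (Fin k),
      (tco (homA d k) (Equiv.swap none none * Equiv.optionCongr τ) : ℂ)
        • permMat (homA d k (Equiv.swap none none * Equiv.optionCongr τ))
      = (d:ℂ) • DH d k := by
    rw [hDH]
    congr 1
    refine Finset.sum_congr rfl fun τ _ => ?_
    rw [hnone]
  have part2 : (d:ℂ) • ∑ i : Fin k, ∑ τ : Equiv.Perm (Fin k),
      (tco (homA d k) (Equiv.swap none (some i) * Equiv.optionCongr τ) : ℂ)
        • permMat (homA d k (Equiv.swap none (some i) * Equiv.optionCongr τ))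
      = XX d k * DH d k := by
    unfold XX
    rw [Finset.sum_mul, Finset.smul_sum]
    refine Finset.sum_congr rfl fun i _ => ?_
    rw [hDH, Finset.mul_sum, Finset.smul_sum]
    refine Finset.sum_congr rfl fun τ _ => ?_
    rw [_root_.map_mul, ← permMat_mul, Matrix.mul_smul, smul_smul,
      ← Nat.cast_mul, tco_swap_mul]
  rw [part1, part2, add_mul, Matrix.smul_mul, one_mul]

lemma optC_mul_swap (i : Fin k) (τ : Equiv.Perm (Fin k)) :
    Equiv.optionCongr τ * Equiv.swap (none : Option (Fin k)) (some i)
      = Equiv.swap (none : Option (Fin k)) (some (τ i)) * Equiv.optionCongr τ := by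
  ext x
  cases x with
  | none =>
    simp [Equiv.Perm.mul_apply]
  | some j =>
    by_cases hji : j = i
    · subst hji
      simp [Equiv.Perm.mul_apply]
    · have h1 : (some j : Option (Fin k)) ≠ none := by simp
      have h2 : (some j : Option (Fin k)) ≠ some i := by simpa using hji
      have h3 : (some (τ j) : Option (Fin k)) ≠ none := by simp
      have h4 : (some (τ j) : Option (Fin k)) ≠ some (τ i) := by
        simpa using fun hc => hji (τ.injective hc)
      simp [Equiv.Perm.mul_apply, Equiv.swap_apply_of_ne_of_ne h1 h2,
        Equiv.swap_apply_of_ne_of_ne h3 h4]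

lemma XX_comm : XX d k * DH d k = DH d k * XX d k := by
  have key : ∀ τ : Equiv.Perm (Fin k),
      permMat (homA d k (Equiv.optionCongr τ)) * XX d k
        = XX d k * permMat (homA d k (Equiv.optionCongr τ)) := by
    intro τ
    unfold XX
    rw [Finset.mul_sum, Finset.sum_mul]
    rw [← Equiv.sum_comp τ (fun i => permMat (homA d k (Equiv.swap none (some i)))
        * permMat (homA d k (Equiv.optionCongr τ)))]
    refine Finset.sum_congr rfl fun i _ => ?_
    rw [permMat_mul, permMat_mul, ← _root_.map_mul, ← _root_.map_mul, optC_mul_swap]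
  unfold DH
  unfold bigD
  rw [Finset.sum_mul, Finset.mul_sum]
  refine Finset.sum_congr rfl fun τ _ => ?_
  rw [Matrix.smul_mul, Matrix.mul_smul]
  congr 1
  exact (key τ).symm

lemma XX_hermitian : (XX d k).IsHermitian := by
  unfold Matrix.IsHermitian XX
  rw [Matrix.conjTranspose_sum]
  refine Finset.sum_congr rfl fun i _ => ?_
  rw [permMat_conjTranspose, ← _root_.map_inv]
  rw [Equiv.swap_inv]

lemma NN_hermitian : ((d:ℂ) • (1 : Matrix (Option (Fin k) → Fin d)
    (Option (Fin k) → Fin d) ℂ) + XX d k).IsHermitian := by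
  have h1 : ((d:ℂ) • (1 : Matrix (Option (Fin k) → Fin d)
      (Option (Fin k) → Fin d) ℂ)).IsHermitian := by
    unfold Matrix.IsHermitian
    rw [Matrix.conjTranspose_smul, Matrix.conjTranspose_one, star_natCast]
  exact h1.add (XX_hermitian d k)

theorem NN_posSemidef : ((d:ℂ) • (1 : Matrix (Option (Fin k) → Fin d)
    (Option (Fin k) → Fin d) ℂ) + XX d k).PosSemidef := by
  set N := (d:ℂ) • (1 : Matrix (Option (Fin k) → Fin d)
    (Option (Fin k) → Fin d) ℂ) + XX d k with hN_def
  have hN : N.IsHermitian := NN_hermitian d k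
  have hcomm : N * DH d k = DH d k * N := by
    rw [hN_def, add_mul, mul_add, Matrix.smul_mul, Matrix.mul_smul, one_mul, mul_one,
      XX_comm]
  have key : (d:ℂ) • Dfull d k = DH d k * N := by
    rw [decomp, ← hN_def, hcomm]
  apply hN.posSemidef_iff_eigenvalues_nonneg.mpr
  intro j
  set ψ : (Option (Fin k) → Fin d) → ℂ := ⇑(hN.eigenvectorBasis j) with hψ_def
  have heig : N *ᵥ ψ = ((hN.eigenvalues j : ℝ) : ℂ) • ψ := by
    rw [hψ_def]
    rw [hN.mulVec_eigenvectorBasis j]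
    funext x
    simp [Complex.real_smul]
  have hψne : ψ ≠ 0 := by
    intro hc
    exact hN.eigenvectorBasis.orthonormal.ne_zero j (by
      apply PiLp.ext
      intro x
      exact congrFun hc x)
  obtain ⟨r1, hr1, hge1⟩ := bigD_quad_eq_real (homA d k) ψ
  obtain ⟨r2, hr2, hge2⟩ := bigD_quad_eq_real ((homA d k).comp (homB k)) ψ
  have hr1' : star ψ ⬝ᵥ (Dfull d k) *ᵥ ψ = (r1 : ℂ) := hr1
  have hr2' : star ψ ⬝ᵥ (DH d k) *ᵥ ψ = (r2 : ℂ) := hr2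
  have hsumpos : 0 < ∑ x, Complex.normSq (ψ x) := by
    obtain ⟨x, hx⟩ := Function.ne_iff.mp hψne
    refine Finset.sum_pos' (fun y _ => Complex.normSq_nonneg _) ⟨x, Finset.mem_univ x, ?_⟩
    exact Complex.normSq_pos.mpr (by simpa using hx)
  have hr1n : 0 ≤ r1 :=
    le_trans (le_of_lt hsumpos) hge1
  have hr2pos : 0 < r2 := lt_of_lt_of_le hsumpos hge2
  have hchain : (d:ℂ) * (r1 : ℂ) = ((hN.eigenvalues j : ℝ) : ℂ) * (r2 : ℂ) := by
    calc (d:ℂ) * (r1 : ℂ)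
        = (d:ℂ) * (star ψ ⬝ᵥ (Dfull d k) *ᵥ ψ) := by rw [hr1']
      _ = star ψ ⬝ᵥ ((d:ℂ) • Dfull d k) *ᵥ ψ := by
          rw [Matrix.smul_mulVec, dotProduct_smul, smul_eq_mul]
      _ = star ψ ⬝ᵥ (DH d k * N) *ᵥ ψ := by rw [key]
      _ = star ψ ⬝ᵥ (DH d k) *ᵥ (N *ᵥ ψ) := by rw [Matrix.mulVec_mulVec]
      _ = star ψ ⬝ᵥ (DH d k) *ᵥ (((hN.eigenvalues j : ℝ) : ℂ) • ψ) := by rw [heig]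
      _ = ((hN.eigenvalues j : ℝ) : ℂ) * (star ψ ⬝ᵥ (DH d k) *ᵥ ψ) := by
          rw [Matrix.mulVec_smul, dotProduct_smul, smul_eq_mul]
      _ = ((hN.eigenvalues j : ℝ) : ℂ) * (r2 : ℂ) := by rw [hr2']
  have hreal : (d:ℝ) * r1 = hN.eigenvalues j * r2 := by
    have := hchain
    push_cast at this
    exact_mod_cast this
  rw [Pi.zero_apply]
  nlinarith [hr1n, hr2pos, hreal, Nat.cast_nonneg (α := ℝ) d]


end Core

section Glue

variable (d k : ℕ)

/-- Identification of `Option (Fin k) → Fin d` with `Fin d × (Fin k → Fin d)`. -/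
noncomputable def EE : (Option (Fin k) → Fin d) ≃ (Fin d × (Fin k → Fin d)) where
  toFun f := (f none, fun j => f (some j))
  invFun p := fun o => o.elim p.1 p.2
  left_inv f := by
    funext o
    cases o <;> rfl
  right_inv p := rfl

noncomputable def Shat (i : Fin k) :
    Matrix (Fin d × (Fin k → Fin d)) (Fin d × (Fin k → Fin d)) ℂ :=
  (permMat (homA d k (Equiv.swap none (some i)))).submatrix ⇑(EE d k).symm ⇑(EE d k).symm

lemma Nhat_eq :
    ((d:ℂ) • (1 : Matrix (Option (Fin k) → Fin d) (Option (Fin k) → Fin d) ℂ)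
        + XX d k).submatrix ⇑(EE d k).symm ⇑(EE d k).symm
      = (d:ℂ) • (1 : Matrix (Fin d × (Fin k → Fin d)) (Fin d × (Fin k → Fin d)) ℂ)
          + ∑ i : Fin k, Shat d k i := by
  ext p q
  simp only [Matrix.submatrix_apply, Matrix.add_apply, Matrix.smul_apply, Matrix.sum_apply,
    Matrix.one_apply, Shat, XX]
  congr 1
  by_cases hpq : p = q
  · subst hpq
    simp
  · have : ¬ ((EE d k).symm p = (EE d k).symm q) := by
      intro hc
      exact hpq ((EE d k).symm.injective hc)
    simp [hpq, this]

lemma Nhat_posSemidef :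
    ((d:ℂ) • (1 : Matrix (Fin d × (Fin k → Fin d)) (Fin d × (Fin k → Fin d)) ℂ)
        + ∑ i : Fin k, Shat d k i).PosSemidef := by
  rw [← Nhat_eq]
  exact (NN_posSemidef d k).submatrix _

lemma Shat_entry (i : Fin k) (Q P : Fin d × (Fin k → Fin d)) :
    Shat d k i Q P
      = if Q = (P.2 i, Function.update P.2 i P.1) then (1:ℂ) else 0 := by
  unfold Shat
  rw [Matrix.submatrix_apply, permMat_apply]
  have hfun : homA d k (Equiv.swap none (some i)) ((EE d k).symm P)
      = (EE d k).symm (P.2 i, Function.update P.2 i P.1) := by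
    funext o
    rw [homA_apply, Equiv.symm_swap]
    cases o with
    | none =>
      rw [Equiv.swap_apply_left]
      rfl
    | some j =>
      by_cases hji : j = i
      · subst hji
        rw [Equiv.swap_apply_right]
        show P.1 = Function.update P.2 j P.1 j
        rw [Function.update_self]
      · have h1 : (some j : Option (Fin k)) ≠ none := by simp
        have h2 : (some j : Option (Fin k)) ≠ some i := by simpa using hji
        rw [Equiv.swap_apply_of_ne_of_ne h1 h2]
        show P.2 j = Function.update P.2 i P.1 j
        rw [Function.update_of_ne hji]
  rw [hfun]
  congr 1
  rw [eq_iff_iff]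
  exact Equiv.apply_eq_iff_eq (EE d k).symm

lemma trace_mul_Shat (ρ : Matrix (Fin d × (Fin k → Fin d)) (Fin d × (Fin k → Fin d)) ℂ)
    (i : Fin k) :
    (ρ * Shat d k i).trace = ((margAB i ρ) * swapM d).trace := by
  have lhs : (ρ * Shat d k i).trace
      = ∑ a : Fin d, ∑ w : Fin k → Fin d, ρ (a, w) (w i, Function.update w i a) := by
    rw [trace_eq_sum]
    rw [show ∑ P, (ρ * Shat d k i) P P
        = ∑ P, ∑ Q, ρ P Q * Shat d k i Q P from
      Finset.sum_congr rfl fun P _ => Matrix.mul_apply]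
    rw [Fintype.sum_prod_type]
    refine Finset.sum_congr rfl fun a _ => Finset.sum_congr rfl fun w _ => ?_
    rw [Finset.sum_eq_single ((w i, Function.update w i a))]
    · rw [Shat_entry]
      simp
    · intro Q _ hQ
      rw [Shat_entry]
      simp only [if_neg hQ, mul_zero]
    · simp
  have rhs : ((margAB i ρ) * swapM d).trace
      = ∑ a : Fin d, ∑ w : Fin k → Fin d, ρ (a, w) (w i, Function.update w i a) := by
    rw [trace_eq_sum]
    rw [show ∑ p, ((margAB i ρ) * swapM d) p p
        = ∑ p, ∑ q, margAB i ρ p q * swapM d q p from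
      Finset.sum_congr rfl fun p _ => Matrix.mul_apply]
    have hswap : ∀ p q : Fin d × Fin d, swapM d q p = if q = (p.2, p.1) then (1:ℂ) else 0 := by
      intro p q
      show (if q.1 = p.2 ∧ q.2 = p.1 then (1:ℂ) else 0) = _
      congr 1
      rw [eq_iff_iff, Prod.ext_iff]
    have hcollapse : ∀ p : Fin d × Fin d, (∑ q, margAB i ρ p q * swapM d q p)
        = margAB i ρ p (p.2, p.1) := by
      intro p
      rw [Finset.sum_eq_single ((p.2, p.1))]
      · rw [hswap]
        simp
      · intro q _ hq
        rw [hswap]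
        simp only [if_neg hq, mul_zero]
      · simp
    rw [Finset.sum_congr rfl fun p _ => hcollapse p]
    rw [Fintype.sum_prod_type]
    have hmarg : ∀ a b : Fin d, margAB i ρ (a, b) (b, a)
        = ∑ f : Fin k → Fin d, if f i = b then ρ (a, f) (b, Function.update f i a) else 0 := by
      intro a b
      rfl
    rw [Finset.sum_congr rfl fun a _ => Finset.sum_congr rfl fun b _ => hmarg a b]
    refine Finset.sum_congr rfl fun a _ => ?_
    rw [Finset.sum_comm]
    refine Finset.sum_congr rfl fun w _ => ?_
    rw [Finset.sum_eq_single (w i)]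
    · simp
    · intro b _ hb
      rw [if_neg (fun hc => hb hc.symm)]
    · simp
  rw [lhs, rhs]

lemma swapM_mul_self : swapM d * swapM d = 1 := by
  ext p q
  rw [Matrix.mul_apply]
  rw [Finset.sum_eq_single ((p.2, p.1))]
  · show (if p.1 = p.1 ∧ p.2 = p.2 then (1:ℂ) else 0) * (if p.2 = q.2 ∧ p.1 = q.1 then (1:ℂ) else 0)
      = (1 : Matrix (Fin d × Fin d) (Fin d × Fin d) ℂ) p q
    rw [if_pos ⟨rfl, rfl⟩, one_mul, Matrix.one_apply]
    congr 1
    rw [eq_iff_iff, Prod.ext_iff]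
    tauto
  · intro r _ hr
    have : ¬ (p.1 = r.2 ∧ p.2 = r.1) := by
      intro ⟨h1, h2⟩
      exact hr (by rw [Prod.ext_iff]; exact ⟨h2.symm, h1.symm⟩)
    show (if p.1 = r.2 ∧ p.2 = r.1 then (1:ℂ) else 0) * _ = 0
    rw [if_neg this, zero_mul]
  · simp

lemma trace_swapM : (swapM d).trace = (d : ℂ) := by
  rw [trace_eq_sum]
  rw [show ∑ p : Fin d × Fin d, swapM d p p
      = ∑ p : Fin d × Fin d, (if p.1 = p.2 ∧ p.2 = p.1 then (1:ℂ) else 0) from rfl]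
  rw [Fintype.sum_prod_type]
  have : ∀ a : Fin d, ∑ b : Fin d, (if a = b ∧ b = a then (1:ℂ) else 0) = 1 := by
    intro a
    rw [Finset.sum_eq_single a]
    · simp
    · intro b _ hb
      rw [if_neg (by tauto)]
    · simp
  rw [Finset.sum_congr rfl fun a _ => this a]
  simp

lemma trace_werner_swap (hd : 2 ≤ d) (t : ℝ) :
    (wernerState d t * swapM d).trace = (t : ℂ) := by
  have hd0 : (d : ℂ) ≠ 0 := by
    exact_mod_cast (by omega : d ≠ 0)
  have hd1 : (d : ℂ) + 1 ≠ 0 := by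
    have : ((d + 1 : ℕ) : ℂ) ≠ 0 := by exact_mod_cast (by omega : d + 1 ≠ 0)
    push_cast at this
    exact this
  have hdm1 : (d : ℂ) - 1 ≠ 0 := by
    intro hc
    have : (d : ℂ) = 1 := by linear_combination hc
    have : d = 1 := by exact_mod_cast this
    omega
  unfold wernerState
  rw [Matrix.add_mul, Matrix.smul_mul, Matrix.smul_mul, Matrix.smul_mul, Matrix.smul_mul,
    Matrix.smul_mul, Matrix.smul_mul, Matrix.add_mul, Matrix.sub_mul, Matrix.one_mul,
    swapM_mul_self]
  rw [Matrix.trace_add, Matrix.trace_smul, Matrix.trace_smul, Matrix.trace_smul,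
    Matrix.trace_smul, Matrix.trace_smul, Matrix.trace_smul]
  rw [Matrix.trace_add, Matrix.trace_sub, trace_swapM, Matrix.trace_one]
  have hcard : (Fintype.card (Fin d × Fin d) : ℂ) = (d:ℂ) * (d:ℂ) := by
    rw [Fintype.card_prod, Fintype.card_fin]
    push_cast
    ring
  rw [hcard]
  simp only [smul_eq_mul]
  push_cast
  field_simp
  ring

open scoped MatrixOrder in
/-- Square root of a positive semidefinite matrix (via the CFC). -/
noncomputable def _root_.Matrix.PosSemidef.sqrt {n : Type*} [Fintype n] [DecidableEq n]
    {A : Matrix n n ℂ} (_ : A.PosSemidef) : Matrix n n ℂ := CFC.sqrt A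

open scoped MatrixOrder in
lemma _root_.Matrix.PosSemidef.posSemidef_sqrt {n : Type*} [Fintype n] [DecidableEq n]
    {A : Matrix n n ℂ} (hA : A.PosSemidef) : hA.sqrt.PosSemidef :=
  (CFC.sqrt_nonneg A).posSemidef

open scoped MatrixOrder in
lemma _root_.Matrix.PosSemidef.sqrt_mul_self {n : Type*} [Fintype n] [DecidableEq n]
    {A : Matrix n n ℂ} (hA : A.PosSemidef) : hA.sqrt * hA.sqrt = A :=
  CFC.sqrt_mul_sqrt_self A hA.nonneg

lemma trace_mul_psd_nonneg {n : Type*} [Fintype n] [DecidableEq n]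
    {A B : Matrix n n ℂ} (hA : A.PosSemidef) (hB : B.PosSemidef) :
    0 ≤ (A * B).trace := by
  have hs := hA.posSemidef_sqrt
  have hM : ((hA.sqrt)ᴴ * B * hA.sqrt).PosSemidef := hB.conjTranspose_mul_mul_same _
  have heq : ((hA.sqrt)ᴴ * B * hA.sqrt).trace = (A * B).trace := by
    calc ((hA.sqrt)ᴴ * B * hA.sqrt).trace
        = (hA.sqrt * B * hA.sqrt).trace := by rw [hs.1]
      _ = (hA.sqrt * (B * hA.sqrt)).trace := by rw [Matrix.mul_assoc]
      _ = ((B * hA.sqrt) * hA.sqrt).trace := by rw [Matrix.trace_mul_comm]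
      _ = (B * (hA.sqrt * hA.sqrt)).trace := by rw [Matrix.mul_assoc]
      _ = (B * A).trace := by rw [hA.sqrt_mul_self]
      _ = (A * B).trace := Matrix.trace_mul_comm _ _
  rw [← heq]
  have hdiag : ∀ x, 0 ≤ ((hA.sqrt)ᴴ * B * hA.sqrt) x x := by
    intro x
    have h := hM.dotProduct_mulVec_nonneg (Pi.single x 1)
    have e : star (Pi.single x 1) ⬝ᵥ ((hA.sqrt)ᴴ * B * hA.sqrt) *ᵥ (Pi.single x 1)
        = ((hA.sqrt)ᴴ * B * hA.sqrt) x x := by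
      have hstar : (star (Pi.single x 1) : n → ℂ) = Pi.single x 1 := by
        funext y
        by_cases hy : y = x
        · subst hy; simp
        · simp [Pi.single_eq_of_ne hy]
      rw [hstar, Matrix.mulVec_single, single_dotProduct]
      simp
    rwa [e] at h
  rw [trace_eq_sum]
  exact Finset.sum_nonneg fun x _ => hdiag x

end Glue

end Stmt10

/-- If a two-qudit Werner state has a `k`-symmetric extension then `t ≥ -d/k`. -/
theorem stmt10 {d k : ℕ} (hd : 2 ≤ d) (hk : 0 < k) (t : ℝ) (ht : -1 ≤ t ∧ t ≤ 1)
    (h : HasSymExt k (wernerState d t)) : -(d : ℝ) / k ≤ t := by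
  obtain ⟨ρ, ⟨hPSD, htr⟩, hmarg⟩ := h
  have hpair : 0 ≤ (ρ * ((d:ℂ) • (1 : Matrix (Fin d × (Fin k → Fin d))
      (Fin d × (Fin k → Fin d)) ℂ) + ∑ i : Fin k, Stmt10.Shat d k i)).trace :=
    Stmt10.trace_mul_psd_nonneg hPSD (Stmt10.Nhat_posSemidef d k)
  have hexp : (ρ * ((d:ℂ) • (1 : Matrix (Fin d × (Fin k → Fin d))
      (Fin d × (Fin k → Fin d)) ℂ) + ∑ i : Fin k, Stmt10.Shat d k i)).trace
      = (d:ℂ) + (k:ℂ) * (t:ℂ) := by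
    rw [Matrix.mul_add, Matrix.trace_add]
    rw [Matrix.mul_smul, Matrix.mul_one, Matrix.trace_smul, htr]
    rw [Finset.mul_sum, Matrix.trace_sum]
    have each : ∀ i : Fin k, (ρ * Stmt10.Shat d k i).trace = (t:ℂ) := by
      intro i
      rw [Stmt10.trace_mul_Shat, hmarg i, Stmt10.trace_werner_swap d hd t]
    rw [Finset.sum_congr rfl fun i _ => each i]
    rw [Finset.sum_const, Finset.card_univ, Fintype.card_fin, nsmul_eq_mul]
    simp [smul_eq_mul]
  rw [hexp] at hpair
  have hcast : ((( (d:ℝ) + (k:ℝ) * t ) : ℝ) : ℂ) = (d:ℂ) + (k:ℂ) * (t:ℂ) := by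
    push_cast
    ring
  rw [← hcast] at hpair
  have hreal : (0:ℝ) ≤ (d:ℝ) + (k:ℝ) * t := Complex.zero_le_real.mp hpair
  have hkpos : (0:ℝ) < (k:ℝ) := by exact_mod_cast hk
  rw [div_le_iff₀ hkpos]
  linarith [hreal]
end

section
/- If two-qubit Werner states ρ_{AB} = ρ_W(t₁) and ρ_{AC} = ρ_W(t₂) are consistent, i.e., there exists a three-qubit state ρ_{ABC} with Tr_C ρ_{ABC} = ρ_W(t₁) and Tr_B ρ_{ABC} = ρ_W(t₂), then t₁ + t₂ ≥ −1. -/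
open Matrix Kronecker BigOperators
open scoped ComplexOrder

/-- If two-qubit Werner states `ρ_{AB} = ρ_W(t₁)` and `ρ_{AC} = ρ_W(t₂)` are consistent,
then `t₁ + t₂ ≥ -1`. -/
theorem stmt11 (t₁ t₂ : ℝ) (h₁ : -1 ≤ t₁ ∧ t₁ ≤ 1) (h₂ : -1 ≤ t₂ ∧ t₂ ≤ 1)
    (h : ∃ ρ : Matrix (Fin 2 × Fin 2 × Fin 2) (Fin 2 × Fin 2 × Fin 2) ℂ,
      IsDensity ρ ∧
      (Matrix.of fun p q : Fin 2 × Fin 2 =>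
          ∑ c : Fin 2, ρ (p.1, p.2, c) (q.1, q.2, c)) = wernerState 2 t₁ ∧
      (Matrix.of fun p q : Fin 2 × Fin 2 =>
          ∑ b : Fin 2, ρ (p.1, b, p.2) (q.1, b, q.2)) = wernerState 2 t₂) :
    -1 ≤ t₁ + t₂ := by
  obtain ⟨ρ, ⟨hPSD, htr⟩, hAB, hAC⟩ := h
  have hpsd := hPSD.dotProduct_mulVec_nonneg
  have hab : ∀ a b : Fin 2, (∑ c : Fin 2, ρ (a, b, c) (b, a, c)) = wernerState 2 t₁ (a, b) (b, a) :=
    fun a b => Matrix.ext_iff.2 hAB (a, b) (b, a)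
  have hac : ∀ a c : Fin 2, (∑ b : Fin 2, ρ (a, b, c) (c, b, a)) = wernerState 2 t₂ (a, c) (c, a) :=
    fun a c => Matrix.ext_iff.2 hAC (a, c) (c, a)
  have wsum : ∀ t : ℝ, (∑ a : Fin 2, ∑ b : Fin 2, wernerState 2 t (a, b) (b, a)) = (t : ℂ) := by
    intro t
    simp [wernerState, swapM, Matrix.one_apply, Fin.sum_univ_two, Matrix.add_apply,
      Matrix.sub_apply, Matrix.smul_apply, Prod.ext_iff]
    push_cast
    ring
  have e1 : (∑ a : Fin 2, ∑ b : Fin 2, ∑ c : Fin 2, ρ (a, b, c) (b, a, c)) = (t₁ : ℂ) := by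
    rw [← wsum t₁]
    exact Finset.sum_congr rfl fun a _ => Finset.sum_congr rfl fun b _ => hab a b
  have e2 : (∑ a : Fin 2, ∑ c : Fin 2, ∑ b : Fin 2, ρ (a, b, c) (c, b, a)) = (t₂ : ℂ) := by
    rw [← wsum t₂]
    exact Finset.sum_congr rfl fun a _ => Finset.sum_congr rfl fun c _ => hac a c
  have e3 : (∑ a : Fin 2, ∑ b : Fin 2, ∑ c : Fin 2, ρ (a, b, c) (a, b, c)) = 1 := by
    simpa [Matrix.trace, Matrix.diag, Fintype.sum_prod_type] using htr
  simp only [Fin.sum_univ_two] at e1 e2 e3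
  have q0 := hpsd (fun x => if x = (0, 0, 0) then 1 else 0)
  have q1 := hpsd (fun x => if x = (1, 1, 1) then 1 else 0)
  have q2 := hpsd (fun x => if x = (0, 0, 1) then 1 else if x = (0, 1, 0) then 1 else
    if x = (1, 0, 0) then 1 else 0)
  have q3 := hpsd (fun x => if x = (0, 0, 1) then 1 else if x = (0, 1, 0) then -1 else 0)
  have q4 := hpsd (fun x => if x = (0, 1, 1) then 1 else if x = (1, 0, 1) then 1 else
    if x = (1, 1, 0) then 1 else 0)
  have q5 := hpsd (fun x => if x = (1, 0, 1) then 1 else if x = (1, 1, 0) then -1 else 0)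
  have sif : ∀ (p : Prop) [Decidable p] (a b : ℂ),
      star (if p then a else b) = if p then star a else star b :=
    fun p _ a b => apply_ite star p a b
  simp only [dotProduct, Matrix.mulVec, Pi.star_apply, sif, star_one, star_neg,
    star_zero, Fintype.sum_prod_type, Fin.sum_univ_two, Prod.mk.injEq] at q0 q1 q2 q3 q4 q5
  norm_num at q0 q1 q2 q3 q4 q5
  have H := add_nonneg (add_nonneg (add_nonneg (add_nonneg (add_nonneg
    (mul_nonneg (by norm_num : (0:ℂ) ≤ 3) q0) (mul_nonneg (by norm_num : (0:ℂ) ≤ 3) q1)) q2) q3) q4) q5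
  have key : (0 : ℂ) ≤ (t₁ : ℂ) + (t₂ : ℂ) + 1 := by
    refine le_of_le_of_eq H ?_
    linear_combination e1 + e2 + e3
  have key' : (0 : ℝ) ≤ t₁ + t₂ + 1 := by exact_mod_cast key
  linarith
end

section
/- For any bipartite density matrix ρ_{AB} on H_A ⊗ H_B with dim H_B = d_B, the state σ_{AB} = (1/(d_B+1))(ρ_A ⊗ I_B + ρ_{AB}) is separable. -/
open Matrix Kronecker BigOperators
open scoped ComplexOrder

noncomputable def chi (z : ZMod 4) : ℂ := Complex.I ^ z.val

lemma zmod4_sum (f : ZMod 4 → ℂ) : ∑ z, f z = f 0 + f 1 + f 2 + f 3 := by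
  show ∑ z : Fin 4, f z = _
  exact Fin.sum_univ_four f

lemma I_pow4 : Complex.I ^ (4:ℕ) = 1 := by norm_num [pow_succ, Complex.I_sq]

lemma chi_add (x y : ZMod 4) : chi (x + y) = chi x * chi y := by
  unfold chi
  rw [← pow_add]
  have : (x + y).val = (x.val + y.val) % 4 := by simp [ZMod.val_add]
  rw [this, ← Nat.div_add_mod (x.val + y.val) 4, pow_add, pow_mul, I_pow4, one_pow, one_mul]
  congr 1
  omega

lemma chi_zero : chi 0 = 1 := by simp [chi]

lemma chi_conj (z : ZMod 4) : (starRingEnd ℂ) (chi z) = chi (-z) := by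
  have h1 : chi z * chi (-z) = 1 := by rw [← chi_add]; simp [chi_zero]
  have h2 : (starRingEnd ℂ) (chi z) * chi z = 1 := by
    unfold chi
    rw [map_pow, Complex.conj_I, ← mul_pow]
    norm_num [Complex.I_sq]
  calc (starRingEnd ℂ) (chi z) = (starRingEnd ℂ) (chi z) * (chi z * chi (-z)) := by rw [h1, mul_one]
    _ = chi (-z) := by rw [← mul_assoc, h2, one_mul]

lemma chi_sum (c : ZMod 4) : ∑ z : ZMod 4, chi (c * z) = if c = 0 then 4 else 0 := by
  have hc : c = 0 ∨ c = 1 ∨ c = 2 ∨ c = 3 := by revert c; decide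
  rcases hc with rfl | rfl | rfl | rfl <;>
  rw [zmod4_sum] <;>
  norm_num [chi, show ((0:ZMod 4)).val = 0 by decide,
    show (ZMod.val (1:ZMod 4)) = 1 by decide, show (ZMod.val (2:ZMod 4)) = 2 by decide,
    show (ZMod.val (3:ZMod 4)) = 3 by decide, show (ZMod.val (4:ZMod 4)) = 0 by decide,
    show (ZMod.val (6:ZMod 4)) = 2 by decide, show (ZMod.val (9:ZMod 4)) = 1 by decide,
    show ((1:ZMod 4) ≠ 0) by decide, show ((2:ZMod 4) ≠ 0) by decide,
    show ((3:ZMod 4) ≠ 0) by decide,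
    pow_succ, Complex.I_sq]

lemma chi_finsum {B : Type*} [Fintype B] (g : B → ZMod 4) :
    chi (∑ y, g y) = ∏ y, chi (g y) := by
  classical
  induction (Finset.univ : Finset B) using Finset.cons_induction with
  | empty => simp [chi_zero]
  | cons a s ha ih => rw [Finset.sum_cons, Finset.prod_cons, chi_add, ih]

/-- the vectors of the design -/
noncomputable def phiVec {B : Type*} [DecidableEq B] (s : (B → ZMod 4) ⊕ B) : B → ℂ :=
  Sum.elim (fun f b => chi (f b)) (fun b0 b => if b0 = b then 1 else 0) s

/-- the weights of the design -/
noncomputable def wt {B : Type*} [Fintype B] (s : (B → ZMod 4) ⊕ B) : ℝ :=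
  Sum.elim (fun _ => ((4:ℝ) ^ Fintype.card B)⁻¹) (fun _ => 1) s

lemma wt_nonneg {B : Type*} [Fintype B] (s : (B → ZMod 4) ⊕ B) : 0 ≤ wt s := by
  rcases s with f | b <;> simp [wt] <;> positivity

lemma indicator_zero_iff {B : Type*} [DecidableEq B] (b b' i j : B)
    (h : ∀ y : B, ((if b' = y then (1:ZMod 4) else 0) + (if i = y then 1 else 0)
      - (if b = y then 1 else 0) - (if j = y then 1 else 0)) = 0) :
    (b = b' ∧ i = j) ∨ (b = i ∧ b' = j) := by
  have h' : ∀ y : B, ((if b' = y then (1:ℕ) else 0) + (if i = y then 1 else 0))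
      = (if b = y then 1 else 0) + (if j = y then 1 else 0) := by
    intro y
    have hy := h y
    split_ifs at hy ⊢ <;> first | rfl | (exfalso; revert hy; decide) | decide
  by_cases hbb' : b = b'
  · subst hbb'
    by_cases hij : i = j
    · exact Or.inl ⟨rfl, hij⟩
    · exfalso
      have hi := h' i
      by_cases hji : j = i
      · exact hij hji.symm
      · rw [if_pos rfl, if_neg hji] at hi
        omega
  · have hb' := h' b'
    rw [if_pos rfl, if_neg hbb'] at hb'
    by_cases hjb' : j = b'
    · have hb := h' b
      rw [if_pos rfl, if_neg (fun hh => hbb' hh.symm)] at hb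
      by_cases hib : i = b
      · exact Or.inr ⟨hib.symm, hjb'.symm⟩
      · exfalso
        rw [if_neg hib] at hb
        by_cases hjb : j = b
        · exact hbb' (hjb.symm.trans hjb')
        · rw [if_neg hjb] at hb
          omega
    · exfalso
      rw [if_neg hjb'] at hb'
      by_cases hib' : i = b'
      · rw [if_pos hib'] at hb'; omega
      · rw [if_neg hib'] at hb'; omega

lemma design {B : Type*} [Fintype B] [DecidableEq B] (b b' i j : B) :
    ∑ s : (B → ZMod 4) ⊕ B, (wt s : ℂ) *
      ((starRingEnd ℂ) (phiVec s b) * phiVec s b' * (phiVec s i * (starRingEnd ℂ) (phiVec s j)))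
    = (if b = b' ∧ i = j then 1 else 0) + (if b = i ∧ b' = j then 1 else 0) := by
  classical
  set d := Fintype.card B with hd
  rw [Fintype.sum_sum_type]
  -- the inr (basis vector) part
  have hr : ∑ b0 : B, (wt (Sum.inr b0 : (B → ZMod 4) ⊕ B) : ℂ) *
      ((starRingEnd ℂ) (phiVec (Sum.inr b0) b) * phiVec (Sum.inr b0) b' *
        (phiVec (Sum.inr b0) i * (starRingEnd ℂ) (phiVec (Sum.inr b0) j)))
      = if b = b' ∧ b = i ∧ b = j then 1 else 0 := by
    have hterm : ∀ b0 : B, (wt (Sum.inr b0 : (B → ZMod 4) ⊕ B) : ℂ) *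
        ((starRingEnd ℂ) (phiVec (Sum.inr b0) b) * phiVec (Sum.inr b0) b' *
          (phiVec (Sum.inr b0) i * (starRingEnd ℂ) (phiVec (Sum.inr b0) j)))
        = if b0 = b then (if b = b' ∧ b = i ∧ b = j then 1 else 0) else 0 := by
      intro b0
      simp only [wt, phiVec, Sum.elim_inr, apply_ite (starRingEnd ℂ), _root_.map_one, map_zero,
        Complex.ofReal_one, one_mul]
      split_ifs <;>
        (try (rename_i hcon; obtain ⟨g1, g2⟩ := hcon; (try obtain ⟨g3, g4⟩ := g2))) <;>
        subst_vars <;> simp_all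
    rw [Finset.sum_congr rfl (fun b0 _ => hterm b0), Finset.sum_ite_eq' Finset.univ b
      (fun _ => if b = b' ∧ b = i ∧ b = j then (1:ℂ) else 0), if_pos (Finset.mem_univ b)]
  -- the inl (phase vector) part
  set c : B → ZMod 4 := fun y => (if b' = y then 1 else 0) + (if i = y then 1 else 0)
      - (if b = y then 1 else 0) - (if j = y then 1 else 0) with hcdef
  have hl : ∑ f : B → ZMod 4, (wt (Sum.inl f : (B → ZMod 4) ⊕ B) : ℂ) *
      ((starRingEnd ℂ) (phiVec (Sum.inl f) b) * phiVec (Sum.inl f) b' *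
        (phiVec (Sum.inl f) i * (starRingEnd ℂ) (phiVec (Sum.inl f) j)))
      = if (∀ y, c y = 0) then 1 else 0 := by
    have hterm : ∀ f : B → ZMod 4,
        ((starRingEnd ℂ) (phiVec (Sum.inl f) b) * phiVec (Sum.inl f) b' *
          (phiVec (Sum.inl f) i * (starRingEnd ℂ) (phiVec (Sum.inl f) j)))
        = ∏ y, chi (c y * f y) := by
      intro f
      simp only [phiVec, Sum.elim_inl, chi_conj, ← chi_add]
      rw [← chi_finsum (fun y => c y * f y)]
      congr 1
      have e1 : ∀ x : B, (∑ y, (if x = y then (1:ZMod 4) else 0) * f y) = f x := by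
        intro x; simp [ite_mul]
      have : ∑ y, c y * f y =
          (∑ y, (if b' = y then (1:ZMod 4) else 0) * f y)
          + (∑ y, (if i = y then (1:ZMod 4) else 0) * f y)
          - (∑ y, (if b = y then (1:ZMod 4) else 0) * f y)
          - (∑ y, (if j = y then (1:ZMod 4) else 0) * f y) := by
        rw [← Finset.sum_add_distrib, ← Finset.sum_sub_distrib, ← Finset.sum_sub_distrib]
        refine Finset.sum_congr rfl fun y _ => ?_
        simp only [hcdef]
        ring
      rw [this, e1, e1, e1, e1]
      ring
    calc ∑ f : B → ZMod 4, (wt (Sum.inl f : (B → ZMod 4) ⊕ B) : ℂ) *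
          ((starRingEnd ℂ) (phiVec (Sum.inl f) b) * phiVec (Sum.inl f) b' *
            (phiVec (Sum.inl f) i * (starRingEnd ℂ) (phiVec (Sum.inl f) j)))
        = (((4:ℝ) ^ d)⁻¹ : ℂ) * ∑ f : B → ZMod 4, ∏ y, chi (c y * f y) := by
          rw [Finset.mul_sum]
          refine Finset.sum_congr rfl fun f _ => ?_
          rw [hterm f]
          simp [wt, hd]
      _ = (((4:ℝ) ^ d)⁻¹ : ℂ) * ∏ y, ∑ z : ZMod 4, chi (c y * z) := by
          congr 1
          rw [Finset.prod_univ_sum]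
          rw [Fintype.sum_equiv (Equiv.refl _)]
          · rfl
          · intro g; rfl
      _ = if (∀ y, c y = 0) then 1 else 0 := by
          rw [Finset.prod_congr rfl (fun y _ => chi_sum (c y))]
          by_cases hall : ∀ y, c y = 0
          · rw [if_pos hall, Finset.prod_congr rfl (fun y _ => if_pos (hall y)),
              Finset.prod_const]
            simp [hd]
          · rw [if_neg hall]
            push_neg at hall
            obtain ⟨y0, hy0⟩ := hall
            rw [Finset.prod_eq_zero (Finset.mem_univ y0)
              (show (if c y0 = 0 then (4:ℂ) else 0) = 0 from if_neg hy0), mul_zero]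
  rw [hl, hr]
  -- final boolean bookkeeping
  have hiff : (∀ y, c y = 0) ↔ ((b = b' ∧ i = j) ∨ (b = i ∧ b' = j)) := by
    constructor
    · intro h; exact indicator_zero_iff b b' i j h
    · rintro (⟨rfl, rfl⟩ | ⟨rfl, rfl⟩) y <;> simp only [hcdef] <;> ring
  have hR : (b = b' ∧ b = i ∧ b = j) ↔ ((b = b' ∧ i = j) ∧ (b = i ∧ b' = j)) := by
    constructor
    · rintro ⟨h1, h2, h3⟩
      exact ⟨⟨h1, h2.symm.trans h3⟩, ⟨h2, h1.symm.trans h3⟩⟩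
    · rintro ⟨⟨h1, h2⟩, ⟨h3, h4⟩⟩
      exact ⟨h1, h3, h3.trans h2⟩
  rw [if_congr hiff rfl rfl, if_congr hR rfl rfl]
  by_cases hP : b = b' ∧ i = j <;> by_cases hQ : b = i ∧ b' = j <;>
    simp [hP, hQ, add_comm]


/-- contraction of a bipartite matrix with the design vector on the B side -/
noncomputable def Mmat {A B : Type*} [Fintype B] [DecidableEq B]
    (ρ : Matrix (A × B) (A × B) ℂ) (s : (B → ZMod 4) ⊕ B) : Matrix A A ℂ :=
  Matrix.of fun a a' => ∑ b, ∑ b',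
    (starRingEnd ℂ) (phiVec s b) * ρ (a, b) (a', b') * phiVec s b'

/-- rank one matrix of the design vector -/
noncomputable def Nmat {B : Type*} [DecidableEq B] (s : (B → ZMod 4) ⊕ B) : Matrix B B ℂ :=
  Matrix.of fun i j => phiVec s i * (starRingEnd ℂ) (phiVec s j)

lemma chi_mul_conj (z : ZMod 4) : (starRingEnd ℂ) (chi z) * chi z = 1 := by
  unfold chi
  rw [map_pow, Complex.conj_I, ← mul_pow]
  norm_num [Complex.I_sq]

/-- trace of Nmat -/
noncomputable def tB {B : Type*} [Fintype B] (s : (B → ZMod 4) ⊕ B) : ℝ :=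
  Sum.elim (fun _ => (Fintype.card B : ℝ)) (fun _ => 1) s

lemma tB_pos {B : Type*} [Fintype B] [Nonempty B] (s : (B → ZMod 4) ⊕ B) : 0 < tB s := by
  rcases s with f | b <;> simp [tB, Fintype.card_pos]

lemma trace_Nmat {B : Type*} [Fintype B] [DecidableEq B] (s : (B → ZMod 4) ⊕ B) :
    (Nmat s).trace = (tB s : ℂ) := by
  rcases s with f | b0
  · simp only [Nmat, Matrix.trace, Matrix.diag, Matrix.of_apply, tB, Sum.elim_inl]
    rw [Finset.sum_congr rfl (fun i _ => by
      rw [mul_comm]; exact chi_mul_conj (f i) : ∀ i ∈ Finset.univ,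
        phiVec (Sum.inl f) i * (starRingEnd ℂ) (phiVec (Sum.inl f) i) = 1)]
    simp
  · simp [Nmat, Matrix.trace, Matrix.diag, phiVec, tB, apply_ite (starRingEnd ℂ),
      Finset.sum_ite_eq]

lemma Nmat_posSemidef {B : Type*} [Fintype B] [DecidableEq B] (s : (B → ZMod 4) ⊕ B) :
    (Nmat s).PosSemidef := by
  have : Nmat s = (Matrix.of fun i (_ : Unit) => phiVec s i) *
      (Matrix.of fun i (_ : Unit) => phiVec s i)ᴴ := by
    ext i j
    simp [Nmat, Matrix.mul_apply, Matrix.conjTranspose_apply]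
  rw [this]
  exact Matrix.posSemidef_self_mul_conjTranspose _

lemma Mmat_posSemidef {A B : Type*} [Fintype A] [Fintype B] [DecidableEq A] [DecidableEq B]
    {ρ : Matrix (A × B) (A × B) ℂ} (hρ : ρ.PosSemidef) (s : (B → ZMod 4) ⊕ B) :
    (Mmat ρ s).PosSemidef := by
  have : Mmat ρ s = (Matrix.of fun (x : A × B) (a : A) =>
      if x.1 = a then phiVec s x.2 else 0)ᴴ * ρ *
      (Matrix.of fun (x : A × B) (a : A) => if x.1 = a then phiVec s x.2 else 0) := by
    ext a a'
    simp only [Mmat, Matrix.of_apply, Matrix.mul_apply, Matrix.conjTranspose_apply,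
      Fintype.sum_prod_type, apply_ite (star : ℂ → ℂ), star_zero, starRingEnd_apply, ite_mul, mul_ite,
      zero_mul, mul_zero]
    conv_rhs => rw [Finset.sum_comm]
    simp only [Finset.sum_ite_eq', Finset.mem_univ, if_true]
    have hinner : ∀ y : B, (∑ x1 : A, ∑ x2 : B,
        if x1 = a then star (phiVec s x2) * ρ (x1, x2) (a', y) else 0)
        = ∑ x2 : B, star (phiVec s x2) * ρ (a, x2) (a', y) := by
      intro y
      rw [Finset.sum_comm]
      simp only [Finset.sum_ite_eq', Finset.mem_univ, if_true]
    trans ∑ y : B, ∑ x2 : B, star (phiVec s x2) * ρ (a, x2) (a', y) * phiVec s y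
    · exact Finset.sum_comm
    · symm
      exact Finset.sum_congr rfl fun y _ => by rw [hinner y, Finset.sum_mul]
  rw [this]
  exact hρ.conjTranspose_mul_mul_same _

/-- basic facts about traces of PSD matrices over ℂ -/
lemma psd_trace_nonneg_and_zero {n : Type*} [Fintype n] [DecidableEq n]
    {M : Matrix n n ℂ} (hM : M.PosSemidef) :
    0 ≤ M.trace ∧ (M.trace = 0 → M = 0) := by
  exact ⟨hM.trace_nonneg, hM.trace_eq_zero_iff.mp⟩

lemma psd_real_smul {n : Type*} [Fintype n] {M : Matrix n n ℂ}
    (hM : M.PosSemidef) {c : ℝ} (hc : 0 ≤ c) : ((c : ℂ) • M).PosSemidef := by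
  constructor
  · simp [Matrix.IsHermitian, Matrix.conjTranspose_smul, hM.1.eq, Complex.conj_ofReal]
  · exact (hM.smul (Complex.zero_le_real.mpr hc)).2

/-- the key design identity at matrix level -/
lemma key_identity {A B : Type*} [Fintype A] [Fintype B] [DecidableEq A] [DecidableEq B]
    (ρ : Matrix (A × B) (A × B) ℂ) :
    ∑ s : (B → ZMod 4) ⊕ B, (wt s : ℂ) • (Mmat ρ s ⊗ₖ Nmat s)
      = ptraceB ρ ⊗ₖ (1 : Matrix B B ℂ) + ρ := by
  ext ⟨a, i⟩ ⟨a', j⟩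
  simp only [Matrix.sum_apply, Matrix.smul_apply, Matrix.kroneckerMap_apply, Matrix.add_apply,
    ptraceB, Matrix.of_apply, Mmat, Nmat, Matrix.one_apply, smul_eq_mul]
  have step1 : ∀ s : (B → ZMod 4) ⊕ B, (wt s : ℂ) *
      ((∑ b, ∑ b', (starRingEnd ℂ) (phiVec s b) * ρ (a, b) (a', b') * phiVec s b') *
        (phiVec s i * (starRingEnd ℂ) (phiVec s j)))
      = ∑ b, ∑ b', ρ (a, b) (a', b') *
          ((wt s : ℂ) * ((starRingEnd ℂ) (phiVec s b) * phiVec s b' *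
            (phiVec s i * (starRingEnd ℂ) (phiVec s j)))) := by
    intro s
    rw [Finset.sum_mul, Finset.mul_sum]
    refine Finset.sum_congr rfl fun b _ => ?_
    rw [Finset.sum_mul, Finset.mul_sum]
    refine Finset.sum_congr rfl fun b' _ => ?_
    ring
  rw [Finset.sum_congr rfl fun s _ => step1 s, Finset.sum_comm]
  rw [Finset.sum_congr rfl fun b _ => Finset.sum_comm]
  have step2 : ∀ b b' : B, ∑ s : (B → ZMod 4) ⊕ B, ρ (a, b) (a', b') *
      ((wt s : ℂ) * ((starRingEnd ℂ) (phiVec s b) * phiVec s b' *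
        (phiVec s i * (starRingEnd ℂ) (phiVec s j))))
      = ρ (a, b) (a', b') *
          ((if b = b' ∧ i = j then 1 else 0) + (if b = i ∧ b' = j then 1 else 0)) := by
    intro b b'
    rw [← Finset.mul_sum, design b b' i j]
  rw [Finset.sum_congr rfl fun b _ => Finset.sum_congr rfl fun b' _ => step2 b b']
  by_cases hij : i = j <;>
    simp [hij, mul_ite, mul_one, mul_zero, ite_and, Finset.sum_ite_eq, Finset.sum_ite_eq',
      Finset.sum_add_distrib, mul_add]


noncomputable def sigA {A B : Type*} [Fintype A] [Fintype B] [DecidableEq A] [DecidableEq B]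
    (ρ : Matrix (A × B) (A × B) ℂ) (s : (B → ZMod 4) ⊕ B) : Matrix A A ℂ :=
  if (Mmat ρ s).trace = 0 then (((Fintype.card A : ℝ))⁻¹ : ℂ) • 1
  else ((Mmat ρ s).trace)⁻¹ • Mmat ρ s

noncomputable def sigB {B : Type*} [Fintype B] [DecidableEq B]
    (s : (B → ZMod 4) ⊕ B) : Matrix B B ℂ :=
  (((tB s)⁻¹ : ℝ) : ℂ) • Nmat s

noncomputable def pwt {A B : Type*} [Fintype A] [Fintype B] [DecidableEq A] [DecidableEq B]
    (ρ : Matrix (A × B) (A × B) ℂ) (s : (B → ZMod 4) ⊕ B) : ℝ :=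
  ((Fintype.card B : ℝ) + 1)⁻¹ * (wt s * ((Mmat ρ s).trace.re * tB s))

lemma trace_Mmat_real {A B : Type*} [Fintype A] [Fintype B] [DecidableEq A] [DecidableEq B]
    {ρ : Matrix (A × B) (A × B) ℂ} (hρ : ρ.PosSemidef) (s : (B → ZMod 4) ⊕ B) :
    (Mmat ρ s).trace = (((Mmat ρ s).trace.re : ℝ) : ℂ) ∧ 0 ≤ (Mmat ρ s).trace.re := by
  have h := (psd_trace_nonneg_and_zero (Mmat_posSemidef hρ s)).1
  obtain ⟨h1, h2⟩ := Complex.nonneg_iff.mp h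
  refine ⟨?_, h1⟩
  apply Complex.ext <;> simp [← h2]

lemma pwt_nonneg {A B : Type*} [Fintype A] [Fintype B] [DecidableEq A] [DecidableEq B]
    {ρ : Matrix (A × B) (A × B) ℂ} (hρ : ρ.PosSemidef) (s : (B → ZMod 4) ⊕ B) :
    0 ≤ pwt ρ s := by
  have h1 := (trace_Mmat_real hρ s).2
  have h2 := wt_nonneg s
  have h3 : (0:ℝ) ≤ tB s := by
    rcases s with f | b <;> simp [tB] <;> positivity
  unfold pwt
  positivity

lemma sigA_density {A B : Type*} [Fintype A] [Fintype B] [DecidableEq A] [DecidableEq B]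
    [Nonempty A] {ρ : Matrix (A × B) (A × B) ℂ} (hρ : ρ.PosSemidef)
    (s : (B → ZMod 4) ⊕ B) : IsDensity (sigA ρ s) := by
  unfold sigA
  by_cases h0 : (Mmat ρ s).trace = 0
  · rw [if_pos h0]
    constructor
    · rw [← Complex.ofReal_inv]
      exact psd_real_smul (M := (1 : Matrix A A ℂ)) Matrix.PosSemidef.one
        (inv_nonneg.mpr (Nat.cast_nonneg _))
    · rw [Matrix.trace_smul, Matrix.trace_one, smul_eq_mul]
      push_cast
      exact inv_mul_cancel₀ (Nat.cast_ne_zero.mpr Fintype.card_ne_zero)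
  · rw [if_neg h0]
    obtain ⟨hre, hnn⟩ := trace_Mmat_real hρ s
    have hrene : (Mmat ρ s).trace.re ≠ 0 := by
      intro hc
      apply h0
      rw [hre, hc, Complex.ofReal_zero]
    constructor
    · rw [hre, ← Complex.ofReal_inv]
      exact psd_real_smul (Mmat_posSemidef hρ s) (by positivity)
    · rw [Matrix.trace_smul, smul_eq_mul, inv_mul_cancel₀ h0]

lemma sigB_density {B : Type*} [Fintype B] [DecidableEq B] [Nonempty B]
    (s : (B → ZMod 4) ⊕ B) : IsDensity (sigB s) := by
  have hpos := tB_pos s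
  constructor
  · exact psd_real_smul (Nmat_posSemidef s) (by positivity)
  · rw [sigB, Matrix.trace_smul, trace_Nmat, smul_eq_mul, ← Complex.ofReal_mul,
      inv_mul_cancel₀ (ne_of_gt hpos), Complex.ofReal_one]

lemma term_eq {A B : Type*} [Fintype A] [Fintype B] [DecidableEq A] [DecidableEq B]
    [Nonempty A] [Nonempty B] {ρ : Matrix (A × B) (A × B) ℂ} (hρ : ρ.PosSemidef)
    (s : (B → ZMod 4) ⊕ B) :
    (pwt ρ s : ℂ) • (sigA ρ s ⊗ₖ sigB s)
      = ((((Fintype.card B : ℝ) + 1)⁻¹ : ℝ) : ℂ) • ((wt s : ℂ) • (Mmat ρ s ⊗ₖ Nmat s)) := by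
  have hBpos := tB_pos s
  by_cases h0 : (Mmat ρ s).trace = 0
  · have hM0 : Mmat ρ s = 0 := (psd_trace_nonneg_and_zero (Mmat_posSemidef hρ s)).2 h0
    have hp0 : pwt ρ s = 0 := by
      unfold pwt
      rw [h0]
      simp
    rw [hp0, hM0]
    simp [Matrix.zero_kronecker]
  · obtain ⟨hre, hnn⟩ := trace_Mmat_real hρ s
    have hrene : (Mmat ρ s).trace.re ≠ 0 := by
      intro hc
      apply h0
      rw [hre, hc, Complex.ofReal_zero]
    have c1 : ((Mmat ρ s).trace.re : ℂ) ≠ 0 := by exact_mod_cast hrene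
    have c2 : ((tB s : ℝ) : ℂ) ≠ 0 := by exact_mod_cast (ne_of_gt hBpos)
    have c3 : (((Fintype.card B : ℝ) + 1 : ℝ) : ℂ) ≠ 0 := by
      have : (0:ℝ) < (Fintype.card B : ℝ) + 1 := by positivity
      exact_mod_cast (ne_of_gt this)
    rw [sigA, if_neg h0, sigB, Matrix.smul_kronecker, Matrix.kronecker_smul]
    simp only [smul_smul]
    congr 1
    rw [hre, pwt]
    push_cast
    field_simp

/-- For any bipartite density matrix `ρ_{AB}`, the state
`(ρ_A ⊗ I_B + ρ_{AB})/(d_B + 1)` is separable. -/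
theorem stmt13 {A B : Type*} [Fintype A] [DecidableEq A] [Fintype B] [DecidableEq B]
    (ρAB : Matrix (A × B) (A × B) ℂ) (hρ : IsDensity ρAB) :
    IsSep (((Fintype.card B + 1 : ℂ))⁻¹ •
      (ptraceB ρAB ⊗ₖ (1 : Matrix B B ℂ) + ρAB)) := by
  classical
  obtain ⟨hpsd, htr⟩ := hρ
  have hBne : Nonempty B := by
    by_contra h
    rw [not_nonempty_iff] at h
    rw [Matrix.trace] at htr
    simp [Finset.univ_eq_empty] at htr
  have hAne : Nonempty A := by
    by_contra h
    rw [not_nonempty_iff] at h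
    rw [Matrix.trace] at htr
    simp [Finset.univ_eq_empty] at htr
  have hkey := key_identity (A := A) (B := B) ρAB
  -- trace of the key identity
  have hptr : (ptraceB ρAB).trace = 1 := by
    rw [← htr, Matrix.trace, Matrix.trace]
    simp only [ptraceB, Matrix.diag, Matrix.of_apply, Fintype.sum_prod_type]
  have htrkey : ∑ s : (B → ZMod 4) ⊕ B,
      wt s * ((Mmat ρAB s).trace.re * tB s) = (Fintype.card B : ℝ) + 1 := by
    have h1 := congrArg Matrix.trace hkey
    rw [Matrix.trace_sum, Matrix.trace_add, Matrix.trace_kronecker, Matrix.trace_one,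
      hptr, htr, one_mul] at h1
    have h2 : ∀ s : (B → ZMod 4) ⊕ B, ((wt s : ℂ) • (Mmat ρAB s ⊗ₖ Nmat s)).trace
        = ((wt s * ((Mmat ρAB s).trace.re * tB s) : ℝ) : ℂ) := by
      intro s
      rw [Matrix.trace_smul, Matrix.trace_kronecker, trace_Nmat,
        (trace_Mmat_real hpsd s).1, smul_eq_mul]
      push_cast [Complex.ofReal_re]
      ring
    rw [Finset.sum_congr rfl fun s _ => h2 s, ← Complex.ofReal_sum] at h1
    exact_mod_cast h1
  have hd1 : (0:ℝ) < (Fintype.card B : ℝ) + 1 := by positivity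
  -- the separable decomposition
  set n := Fintype.card ((B → ZMod 4) ⊕ B) with hn
  set e : Fin n ≃ ((B → ZMod 4) ⊕ B) := (Fintype.equivFin ((B → ZMod 4) ⊕ B)).symm with he
  refine ⟨n, fun i => pwt ρAB (e i), fun i => sigA ρAB (e i), fun i => sigB (e i),
    fun i => pwt_nonneg hpsd (e i), ?_, fun i => sigA_density hpsd (e i),
    fun i => sigB_density (e i), ?_⟩
  · rw [Equiv.sum_comp e (pwt ρAB)]
    unfold pwt
    rw [← Finset.mul_sum, htrkey, inv_mul_cancel₀ (ne_of_gt hd1)]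
  · rw [Equiv.sum_comp e (fun s => (pwt ρAB s : ℂ) • (sigA ρAB s ⊗ₖ sigB s)),
      Finset.sum_congr rfl fun s _ => term_eq hpsd s, ← Finset.smul_sum, hkey]
    congr 1
    push_cast
    norm_num
end
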